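/- Let s = 2 and let Y be an admissible partition of C². There exists a map M from the set of nonempty finite chains in K_Y to K_Y such that: (i) M is order-reversing, i.e. if a chain σ' is a subchain of a chain σ then M(σ) ≤ M(σ'); (ii) for every chain σ : A_t < A_{t-1} < ⋯ < A₀ in K_Y one has A_t ≤ M(σ); and (iii) M(σ) involves at most 2 elements of Y if t = 0, and at most 4t elements of Y if t ≥ 1. -/

import Mathlib

namespace BrinThompson

/-- A finite binary word. -/
abbrev Word : Type := List Bool

/-- A box in `C^s`, recorded as the tuple of binary words whose cylinders form the product. -/
abbrev Box (s : ℕ) : Type := Fin s → Word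

/-- The box obtained from `b` by replacing its `i`-th word `u` by `u ++ [bit]`. -/
def expandBox {s : ℕ} (i : Fin s) (bit : Bool) (b : Box s) : Box s :=
  Function.update b i (b i ++ [bit])

/-- `B` is obtained from `A` by a simple expansion of colour `i`: one box of `A` is replaced by
its two halves in direction `i`. -/
def SimpleExpansionC {s : ℕ} (i : Fin s) (A B : Finset (Box s)) : Prop :=
  ∃ b ∈ A, B = insert (expandBox i false b) (insert (expandBox i true b) (A.erase b))

/-- `B` is obtained from `A` by a simple expansion of some colour. -/
def SimpleExpansion {s : ℕ} (A B : Finset (Box s)) : Prop :=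
  ∃ i : Fin s, SimpleExpansionC i A B

/-- `Expands A B` (`A ≤ B`): `B` is a descendant of `A`, i.e. `B` is obtained from `A` by
finitely many simple expansions. -/
def Expands {s : ℕ} (A B : Finset (Box s)) : Prop :=
  Relation.ReflTransGen SimpleExpansion A B

/-- The one-element partition `{C^s}`. -/
def trivialPartition (s : ℕ) : Finset (Box s) := {fun _ => []}

/-- An admissible partition of `C^s`. -/
def Admissible {s : ℕ} (A : Finset (Box s)) : Prop :=
  Expands (trivialPartition s) A

/-- `M = glb_A(Ω)`: the greatest lower bound of `Ω` above `A`. -/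
def IsGlbAbove {s : ℕ} (A : Finset (Box s)) (Ω : Set (Finset (Box s)))
    (M : Finset (Box s)) : Prop :=
  Admissible M ∧ Expands A M ∧ (∀ B ∈ Ω, Expands M B) ∧
    ∀ N : Finset (Box s), Admissible N → Expands A N → (∀ B ∈ Ω, Expands N B) → Expands N M

/-- The depth of a box: the total length of its defining words. -/
def depth {s : ℕ} (b : Box s) : ℕ := ∑ i, (b i).length

/-- `BoxLE m b`: the box `m` contains the box `b`, i.e. each word of `m` is a prefix of the
corresponding word of `b`. -/
def BoxLE {s : ℕ} (m b : Box s) : Prop := ∀ i, m i <+: b i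

/-- A box `y ∈ Y` is locally maximal with respect to `A`: for the box `m` of `A` containing `y`,
every box `j ∈ Y` contained in `m` satisfies `l(A,j) ≤ l(A,y)`, i.e. `depth j ≤ depth y`. -/
def LocallyMaximal {s : ℕ} (A Y : Finset (Box s)) (y : Box s) : Prop :=
  ∀ m ∈ A, BoxLE m y → ∀ j ∈ Y, BoxLE m j → depth j ≤ depth y

/-- There is an edge of colour `i` between `y, y' ∈ Y` in the graph `Γ_A`: some simple
contraction `Z` of `Y` of colour `i` with `A ≤ Z` merges exactly `y` and `y'`. -/
def GammaAdjC {s : ℕ} (A Y : Finset (Box s)) (i : Fin s) (y y' : Box s) : Prop :=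
  y ≠ y' ∧ y ∈ Y ∧ y' ∈ Y ∧
    ∃ Z : Finset (Box s), Admissible Z ∧ SimpleExpansionC i Z Y ∧ Expands A Z ∧
      Y \ Z = {y, y'}

/-- The graph `Γ_A` (with its colours forgotten). -/
def Gamma {s : ℕ} (A Y : Finset (Box s)) : SimpleGraph (Box s) where
  Adj y y' := ∃ i : Fin s, GammaAdjC A Y i y y'
  symm := by
    constructor
    rintro y y' ⟨i, hne, hy, hy', Z, h1, h2, h3, h4⟩
    exact ⟨i, hne.symm, hy', hy, Z, h1, h2, h3, by rwa [Finset.pair_comm]⟩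
  loopless := by constructor; rintro y ⟨i, hne, _⟩; exact hne rfl

/-- The geometric realization of the order complex (nerve) of the relation `le` on `P`:
finitely supported probability densities on `P` whose support is a chain, topologised as a
subspace of `P → ℝ`. -/
abbrev OrderComplex (P : Type*) (le : P → P → Prop) : Type _ :=
  {f : P → ℝ // (Function.support f).Finite ∧ (∀ x, 0 ≤ f x) ∧
    IsChain le (Function.support f) ∧ ∑ᶠ x, f x = 1}

/-- A space is `t`-connected if it is nonempty, path-connected and its homotopy groups
`π_k` vanish for `1 ≤ k ≤ t`. -/
def TConnected (t : ℕ) (X : Type*) [TopologicalSpace X] : Prop :=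
  Nonempty X ∧ PathConnectedSpace X ∧
    ∀ k : ℕ, 1 ≤ k → k ≤ t → ∀ x : X, Subsingleton (HomotopyGroup (Fin k) X x)

-- ======= layer 1 : semantics =======
abbrev Pt := Fin 2 → ℕ → Bool

def WMem (x : ℕ → Bool) (u : Word) : Prop := ∀ k, (h : k < u.length) → u.get ⟨k, h⟩ = x k

def bs (b : Box 2) : Set Pt := {x | ∀ i, WMem (x i) (b i)}

lemma wmem_default (u : Word) : WMem (fun k => u.getD k false) u := by
  intro k h
  show u.get ⟨k,h⟩ = u.getD k false
  rw [List.getD_eq_getElem _ _ h, List.get_eq_getElem]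

lemma wmem_mono {u v : Word} (h : u <+: v) {x : ℕ → Bool} (hx : WMem x v) : WMem x u := by
  obtain ⟨t, rfl⟩ := h
  intro k hk
  have hk' : k < u.length + t.length := by omega
  have := hx k (by simpa using hk')
  rw [← this]
  simp [List.getElem_append_left hk]

lemma prefix_of_agree {u v : Word} (hl : u.length ≤ v.length)
    (h : ∀ k (h1 : k < u.length) (h2 : k < v.length), u.get ⟨k, h1⟩ = v.get ⟨k, h2⟩) :
    u <+: v := by
  rw [List.prefix_iff_eq_take]
  apply List.ext_get (by simp [min_eq_left hl])
  intro k h1 h2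
  have hkv : k < v.length := lt_of_lt_of_le h1 hl
  simpa [List.getElem_take] using h k h1 hkv

lemma comparable_of_agree {u v : Word}
    (h : ∀ k (h1 : k < u.length) (h2 : k < v.length), u.get ⟨k, h1⟩ = v.get ⟨k, h2⟩) :
    u <+: v ∨ v <+: u := by
  rcases le_total u.length v.length with hl | hl
  · exact Or.inl (prefix_of_agree hl h)
  · exact Or.inr (prefix_of_agree hl (fun k h1 h2 => (h k h2 h1).symm))

lemma comparable_of_wmem {u v : Word} {x : ℕ → Bool} (hu : WMem x u) (hv : WMem x v) :
    u <+: v ∨ v <+: u :=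
  comparable_of_agree (fun k h1 h2 => (hu k h1).trans (hv k h2).symm)

lemma wmem_concat {u : Word} {a : Bool} {x : ℕ → Bool} :
    WMem x (u ++ [a]) ↔ WMem x u ∧ x u.length = a := by
  constructor
  · intro h
    refine ⟨wmem_mono ⟨[a], rfl⟩ h, ?_⟩
    have := h u.length (by simp)
    rw [← this]
    simp [List.get_eq_getElem]
  · rintro ⟨h1, h2⟩ k hk
    simp only [List.length_append, List.length_singleton] at hk
    rcases lt_or_ge k u.length with hk' | hk'
    · have := h1 k hk'
      rw [← this]
      simp [List.get_eq_getElem, List.getElem_append_left hk']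
    · have hke : k = u.length := by omega
      subst hke
      simp [List.get_eq_getElem, h2]

-- box level
lemma bs_mono {m b : Box 2} (h : BoxLE m b) : bs b ⊆ bs m := by
  intro x hx i
  exact wmem_mono (h i) (hx i)

def defaultPt (b : Box 2) : Pt := fun i k => (b i).getD k false

lemma defaultPt_mem (b : Box 2) : defaultPt b ∈ bs b := fun i => wmem_default (b i)

lemma bs_nonempty (b : Box 2) : (bs b).Nonempty := ⟨defaultPt b, defaultPt_mem b⟩

lemma bs_inter_nonempty_iff {b c : Box 2} :
    (bs b ∩ bs c).Nonempty ↔ ∀ i, b i <+: c i ∨ c i <+: b i := by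
  constructor
  · rintro ⟨x, hxb, hxc⟩ i
    exact comparable_of_wmem (hxb i) (hxc i)
  · intro h
    classical
    refine ⟨fun i k => ((if b i <+: c i then c i else b i).getD k false), fun i => ?_, fun i => ?_⟩
    · by_cases hbc : b i <+: c i
      · simp only [hbc, if_true]
        exact wmem_mono hbc (wmem_default _)
      · simp only [hbc, if_false]
        exact wmem_default _
    · by_cases hbc : b i <+: c i
      · simp only [hbc, if_true]
        exact wmem_default _
      · simp only [hbc, if_false]
        rcases h i with h' | h'
        · exact absurd h' hbc
        · exact wmem_mono h' (wmem_default _)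

lemma bs_subset_iff {b m : Box 2} : bs b ⊆ bs m ↔ BoxLE m b := by
  constructor
  · intro h i
    have hcomp : m i <+: b i ∨ b i <+: m i := by
      have := bs_inter_nonempty_iff.mp ⟨defaultPt b, defaultPt_mem b, h (defaultPt_mem b)⟩ i
      tauto
    rcases hcomp with h' | h'
    · exact h'
    · -- b i <+: m i ; show lengths equal, else contradiction
      rcases eq_or_lt_of_le h'.length_le with hlen | hlen
      · exact (h'.eq_of_length hlen) ▸ List.prefix_rfl
      · exfalso
        classical
        set x : Pt := fun j k => if j = i ∧ ¬ k < (b j).length then !((m j).getD k false)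
          else (b j).getD k false with hxdef
        have hxb : x ∈ bs b := by
          intro j k hk
          simp only [hxdef, hk, not_true, and_false, if_false]
          exact wmem_default (b j) k hk
        have hxm := h hxb i
        have hp : (b i).length < (m i).length := hlen
        have := hxm (b i).length hp
        rw [show x i (b i).length = !((m i).getD (b i).length false) by
          simp [hxdef]] at this
        rw [List.getD_eq_getElem _ _ hp] at this
        simp [List.get_eq_getElem] at this
  · exact bs_mono

lemma bs_inj {b c : Box 2} (h : bs b = bs c) : b = c := by
  have h1 : BoxLE c b := bs_subset_iff.mp h.le
  have h2 : BoxLE b c := bs_subset_iff.mp h.ge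
  funext i
  exact (h2 i).eq_of_length (le_antisymm (h2 i).length_le (h1 i).length_le)

lemma expandBox_apply_self {s : ℕ} (i : Fin s) (a : Bool) (b : Box s) :
    expandBox i a b i = b i ++ [a] := by simp [expandBox]

lemma expandBox_apply_ne {s : ℕ} {i j : Fin s} (h : j ≠ i) (a : Bool) (b : Box s) :
    expandBox i a b j = b j := by simp [expandBox, Function.update_of_ne h]

lemma boxLE_expandBox (i : Fin 2) (a : Bool) (b : Box 2) : BoxLE b (expandBox i a b) := by
  intro j
  by_cases hj : j = i
  · subst hj; rw [expandBox_apply_self]; exact ⟨[a], rfl⟩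
  · rw [expandBox_apply_ne hj]

lemma mem_bs_expandBox {i : Fin 2} {a : Bool} {b : Box 2} {x : Pt} :
    x ∈ bs (expandBox i a b) ↔ x ∈ bs b ∧ x i (b i).length = a := by
  constructor
  · intro hx
    refine ⟨bs_mono (boxLE_expandBox i a b) hx, ?_⟩
    have := hx i
    rw [expandBox_apply_self] at this
    exact (wmem_concat.mp this).2
  · rintro ⟨hx, hbit⟩ j
    by_cases hj : j = i
    · subst hj
      rw [expandBox_apply_self]
      exact wmem_concat.mpr ⟨hx j, hbit⟩
    · rw [expandBox_apply_ne hj]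
      exact hx j

lemma bs_split (i : Fin 2) (b : Box 2) :
    bs b = bs (expandBox i false b) ∪ bs (expandBox i true b) := by
  ext x
  simp only [Set.mem_union, mem_bs_expandBox]
  constructor
  · intro hx
    rcases Bool.eq_false_or_eq_true (x i (b i).length) with hcase | hcase
    · exact Or.inr ⟨hx, hcase⟩
    · exact Or.inl ⟨hx, hcase⟩
  · rintro (⟨hx, _⟩ | ⟨hx, _⟩) <;> exact hx

lemma bs_split_disjoint (i : Fin 2) (b : Box 2) :
    Disjoint (bs (expandBox i false b)) (bs (expandBox i true b)) := by
  rw [Set.disjoint_left]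
  intro x hx0 hx1
  have h0 := (mem_bs_expandBox.mp hx0).2
  have h1 := (mem_bs_expandBox.mp hx1).2
  rw [h0] at h1
  exact Bool.false_ne_true h1

lemma fin2_cases (i j : Fin 2) (h : i ≠ j) (k : Fin 2) : k = i ∨ k = j := by
  have hi := i.isLt; have hj := j.isLt; have hk := k.isLt
  have hne : i.val ≠ j.val := fun hv => h (Fin.ext hv)
  by_cases hki : k.val = i.val
  · exact Or.inl (Fin.ext hki)
  · exact Or.inr (Fin.ext (by omega))


-- ===== layer 2 =====

lemma BoxLE.rfl {b : Box 2} : BoxLE b b := fun _ => List.prefix_rfl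

lemma BoxLE.trans {a b c : Box 2} (h1 : BoxLE a b) (h2 : BoxLE b c) : BoxLE a c :=
  fun i => (h1 i).trans (h2 i)

lemma boxLE_antisymm {a b : Box 2} (h1 : BoxLE a b) (h2 : BoxLE b a) : a = b := by
  funext i
  exact (h1 i).eq_of_length (le_antisymm (h1 i).length_le (h2 i).length_le)

lemma depth_two (b : Box 2) : depth b = (b 0).length + (b 1).length := by
  simp [depth, Fin.sum_univ_two]

lemma depth_le_of_boxLE {m b : Box 2} (h : BoxLE m b) : depth m ≤ depth b := by
  rw [depth_two, depth_two]
  have h0 := (h 0).length_le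
  have h1 := (h 1).length_le
  omega

lemma eq_of_boxLE_depth {m b : Box 2} (h : BoxLE m b) (hd : depth b ≤ depth m) : m = b := by
  rw [depth_two, depth_two] at hd
  have h0 := (h 0).length_le
  have h1 := (h 1).length_le
  funext i
  rcases fin2_cases 0 1 (by decide) i with rfl | rfl
  · exact (h 0).eq_of_length (by omega)
  · exact (h 1).eq_of_length (by omega)

structure IsPartOf (X : Finset (Box 2)) (S : Set Pt) : Prop where
  subS : ∀ b ∈ X, bs b ⊆ S
  cover : S ⊆ ⋃ b ∈ X, bs b
  disj : ∀ b ∈ X, ∀ c ∈ X, b ≠ c → Disjoint (bs b) (bs c)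

lemma IsPartOf.mem_of_pt {X : Finset (Box 2)} {S : Set Pt} (h : IsPartOf X S) {x : Pt}
    (hx : x ∈ S) : ∃ b ∈ X, x ∈ bs b := by
  have := h.cover hx
  simpa using this

lemma IsPartOf.eq_of_meets {X : Finset (Box 2)} {S : Set Pt} (h : IsPartOf X S) {b c : Box 2}
    (hb : b ∈ X) (hc : c ∈ X) (hm : (bs b ∩ bs c).Nonempty) : b = c := by
  by_contra hne
  obtain ⟨x, hx1, hx2⟩ := hm
  exact Set.disjoint_left.mp (h.disj b hb c hc hne) hx1 hx2

lemma simpleExpansion_isPartOf {A B : Finset (Box 2)} {S : Set Pt}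
    (hse : SimpleExpansion A B) (h : IsPartOf A S) : IsPartOf B S := by
  obtain ⟨i, b, hb, rfl⟩ := hse
  have hsplit := bs_split i b
  constructor
  · intro c hc
    simp only [Finset.mem_insert, Finset.mem_erase] at hc
    rcases hc with rfl | rfl | ⟨_, hc⟩
    · exact (bs_mono (boxLE_expandBox i false b)).trans (h.subS b hb)
    · exact (bs_mono (boxLE_expandBox i true b)).trans (h.subS b hb)
    · exact h.subS c hc
  · intro x hx
    obtain ⟨c, hc, hxc⟩ := h.mem_of_pt hx
    by_cases hcb : c = b
    · subst hcb
      rw [hsplit] at hxc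
      rcases hxc with hxc | hxc
      · exact Set.mem_biUnion (Finset.mem_insert_self _ _) hxc
      · exact Set.mem_biUnion (Finset.mem_insert_of_mem (Finset.mem_insert_self _ _)) hxc
    · exact Set.mem_biUnion
        (Finset.mem_insert_of_mem (Finset.mem_insert_of_mem (Finset.mem_erase.mpr ⟨hcb, hc⟩)))
        hxc
  · have haux : ∀ a : Bool, ∀ c ∈ A.erase b, Disjoint (bs (expandBox i a b)) (bs c) := by
      intro a c hc
      have hcb := (Finset.mem_erase.mp hc).1
      have hcA := (Finset.mem_erase.mp hc).2
      exact Disjoint.mono_left (bs_mono (boxLE_expandBox i a b))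
        (h.disj b hb c hcA (Ne.symm hcb))
    intro c hc d hd hne
    simp only [Finset.mem_insert] at hc hd
    rcases hc with rfl | rfl | hc <;> rcases hd with rfl | rfl | hd
    · exact absurd rfl hne
    · exact bs_split_disjoint i b
    · exact haux false _ hd
    · exact (bs_split_disjoint i b).symm
    · exact absurd rfl hne
    · exact haux true _ hd
    · exact (haux false _ hc).symm
    · exact (haux true _ hc).symm
    · exact h.disj c (Finset.mem_of_mem_erase hc) d (Finset.mem_of_mem_erase hd) hne

lemma expands_isPartOf {A B : Finset (Box 2)} {S : Set Pt}
    (hab : Expands A B) (h : IsPartOf A S) : IsPartOf B S := by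
  induction hab with
  | refl => exact h
  | tail _ hse ih => exact simpleExpansion_isPartOf hse ih

lemma expands_refines {A B : Finset (Box 2)} (hab : Expands A B) :
    ∀ b ∈ B, ∃ a ∈ A, BoxLE a b := by
  induction hab with
  | refl => exact fun b hb => ⟨b, hb, BoxLE.rfl⟩
  | tail _ hse ih =>
    obtain ⟨i, c, hc, rfl⟩ := hse
    intro b hb
    simp only [Finset.mem_insert, Finset.mem_erase] at hb
    rcases hb with rfl | rfl | ⟨_, hb⟩
    · obtain ⟨a, ha, hle⟩ := ih c hc
      exact ⟨a, ha, hle.trans (boxLE_expandBox _ _ _)⟩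
    · obtain ⟨a, ha, hle⟩ := ih c hc
      exact ⟨a, ha, hle.trans (boxLE_expandBox _ _ _)⟩
    · exact ih b hb

lemma trivial_isPartOf : IsPartOf (trivialPartition 2) Set.univ := by
  constructor
  · intro b _; exact Set.subset_univ _
  · intro x _
    refine Set.mem_biUnion (Finset.mem_singleton_self _) ?_
    intro i k hk
    exact absurd hk (by simp)
  · intro b hb c hc hne
    simp only [trivialPartition, Finset.mem_singleton] at hb hc
    exact absurd (hb.trans hc.symm) hne

lemma admissible_isPartOf {X : Finset (Box 2)} (h : Admissible X) : IsPartOf X Set.univ :=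
  expands_isPartOf h trivial_isPartOf

lemma admissible_refines {A B : Finset (Box 2)} (h1 : Expands A B) {b : Box 2} (hb : b ∈ B) :
    ∃ a ∈ A, BoxLE a b := expands_refines h1 b hb

lemma expands_boxes_sub {A B : Finset (Box 2)} (hab : Expands A B) {S0 : Set Pt}
    (hA : ∀ a ∈ A, bs a ⊆ S0) : ∀ b ∈ B, bs b ⊆ S0 := by
  intro b hb
  obtain ⟨a, ha, hle⟩ := expands_refines hab b hb
  exact (bs_mono hle).trans (hA a ha)

lemma simpleExpansion_union {M N T : Finset (Box 2)} {S0 : Set Pt}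
    (hse : SimpleExpansion M N) (hM : ∀ a ∈ M, bs a ⊆ S0)
    (hT : ∀ t ∈ T, Disjoint (bs t) S0) : SimpleExpansion (M ∪ T) (N ∪ T) := by
  obtain ⟨i, b, hb, rfl⟩ := hse
  have hbT : b ∉ T := by
    intro hbT
    obtain ⟨x, hx⟩ := bs_nonempty b
    exact Set.disjoint_left.mp (hT b hbT) hx (hM b hb hx)
  refine ⟨i, b, Finset.mem_union_left _ hb, ?_⟩
  rw [Finset.erase_union_distrib, Finset.erase_eq_of_notMem hbT,
    Finset.insert_union, Finset.insert_union]

lemma expands_union {A B T : Finset (Box 2)} {S0 : Set Pt}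
    (hab : Expands A B) (hA : ∀ a ∈ A, bs a ⊆ S0)
    (hT : ∀ t ∈ T, Disjoint (bs t) S0) : Expands (A ∪ T) (B ∪ T) := by
  induction hab with
  | refl => exact Relation.ReflTransGen.refl
  | @tail M N hAM hse ih =>
    exact ih.tail (simpleExpansion_union hse (expands_boxes_sub hAM hA) hT)

lemma part_eq_singleton {X : Finset (Box 2)} {c : Box 2} (h : IsPartOf X (bs c))
    (hc : c ∈ X) : X = {c} := by
  rw [Finset.eq_singleton_iff_unique_mem]
  refine ⟨hc, fun b hb => ?_⟩
  by_contra hne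
  obtain ⟨x, hx⟩ := bs_nonempty b
  exact Set.disjoint_left.mp (h.disj b hb c hc hne) hx (h.subS b hb hx)

lemma part_boxLE {X : Finset (Box 2)} {c : Box 2} (h : IsPartOf X (bs c)) {b : Box 2}
    (hb : b ∈ X) : BoxLE c b := bs_subset_iff.mp (h.subS b hb)

lemma part_split {X : Finset (Box 2)} {c : Box 2} (h : IsPartOf X (bs c)) (hc : c ∉ X) :
    ∃ i : Fin 2, ∀ b ∈ X, (c i).length < (b i).length := by
  by_contra hcon
  push_neg at hcon
  obtain ⟨b1, hb1, hl1⟩ := hcon 0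
  obtain ⟨b2, hb2, hl2⟩ := hcon 1
  have he1 : b1 0 = c 0 := ((part_boxLE h hb1) 0).eq_of_length
    (le_antisymm ((part_boxLE h hb1) 0).length_le hl1) |>.symm
  have he2 : b2 1 = c 1 := ((part_boxLE h hb2) 1).eq_of_length
    (le_antisymm ((part_boxLE h hb2) 1).length_le hl2) |>.symm
  have hmeet : (bs b1 ∩ bs b2).Nonempty := by
    rw [bs_inter_nonempty_iff]
    intro i
    rcases fin2_cases 0 1 (by decide) i with rfl | rfl
    · left; rw [he1]; exact part_boxLE h hb2 0
    · right; rw [he2]; exact part_boxLE h hb1 1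
  have hbe := h.eq_of_meets hb1 hb2 hmeet
  subst hbe
  apply hc
  have : b1 = c := by
    funext i
    rcases fin2_cases 0 1 (by decide) i with rfl | rfl
    · exact he1
    · exact he2
  rwa [this] at hb1

def bitAt (b : Box 2) (i : Fin 2) (n : ℕ) : Bool := (b i).getD n false

lemma prefix_snoc_of {u v : Word} (h : u <+: v) (hl : u.length < v.length) :
    u ++ [v.getD u.length false] <+: v := by
  obtain ⟨t, rfl⟩ := h
  have ht : t ≠ [] := by
    intro h'
    rw [h'] at hl
    simp at hl
  obtain ⟨a, t', rfl⟩ := List.exists_cons_of_ne_nil ht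
  have hlt : u.length < (u ++ a :: t').length := by simp
  have : (u ++ a :: t').getD u.length false = a := by
    rw [List.getD_eq_getElem _ _ hlt]
    rw [List.getElem_append_right (le_refl u.length)]
    simp
  rw [this]
  exact ⟨t', by simp⟩

lemma part_half {X : Finset (Box 2)} {c : Box 2} {i : Fin 2} (h : IsPartOf X (bs c))
    (hi : ∀ b ∈ X, (c i).length < (b i).length) (a : Bool) :
    IsPartOf (X.filter (fun b => bitAt b i (c i).length = a)) (bs (expandBox i a c)) := by
  classical
  have hble : ∀ b ∈ X.filter (fun b => bitAt b i (c i).length = a),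
      BoxLE (expandBox i a c) b := by
    intro b hb
    rw [Finset.mem_filter] at hb
    intro j
    by_cases hj : j = i
    · subst hj
      rw [expandBox_apply_self]
      have := prefix_snoc_of (part_boxLE h hb.1 j) (hi b hb.1)
      rwa [show (b j).getD (c j).length false = a from hb.2] at this
    · rw [expandBox_apply_ne hj]
      exact part_boxLE h hb.1 j
  constructor
  · intro b hb
    exact bs_mono (hble b hb)
  · intro x hx
    have hxc : x ∈ bs c := bs_mono (boxLE_expandBox i a c) hx
    obtain ⟨b, hb, hxb⟩ := h.mem_of_pt hxc
    have hbit : x i (c i).length = a := (mem_bs_expandBox.mp hx).2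
    have hbX : b ∈ X.filter (fun b => bitAt b i (c i).length = a) := by
      rw [Finset.mem_filter]
      refine ⟨hb, ?_⟩
      have hlen := hi b hb
      have := hxb i (c i).length hlen
      unfold bitAt
      rw [List.getD_eq_getElem _ _ hlen]
      rw [List.get_eq_getElem] at this
      rw [this, hbit]
    exact Set.mem_biUnion hbX hxb
  · intro b hb d hd hne
    exact h.disj b (Finset.mem_filter.mp hb).1 d (Finset.mem_filter.mp hd).1 hne

open Finset in
lemma part_filter_split (X : Finset (Box 2)) (i : Fin 2) (n : ℕ) :
    X.filter (fun b => bitAt b i n = false) ∪ X.filter (fun b => bitAt b i n = true) = X := by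
  classical
  rw [← Finset.filter_or]
  rw [Finset.filter_true_of_mem]
  intro b _
  rcases Bool.eq_false_or_eq_true (bitAt b i n) with h | h
  · exact Or.inr h
  · exact Or.inl h

lemma part_half_nonempty {X : Finset (Box 2)} {c : Box 2} {i : Fin 2} (h : IsPartOf X (bs c))
    (hi : ∀ b ∈ X, (c i).length < (b i).length) (a : Bool) :
    (X.filter (fun b => bitAt b i (c i).length = a)).Nonempty := by
  obtain ⟨x, hx⟩ := bs_nonempty (expandBox i a c)
  obtain ⟨b, hb, _⟩ := (part_half h hi a).mem_of_pt hx
  exact ⟨b, hb⟩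

lemma part_half_card_lt {X : Finset (Box 2)} {c : Box 2} {i : Fin 2} (h : IsPartOf X (bs c))
    (hi : ∀ b ∈ X, (c i).length < (b i).length) (a : Bool) :
    (X.filter (fun b => bitAt b i (c i).length = a)).card < X.card := by
  apply Finset.card_lt_card
  rw [Finset.ssubset_iff_of_subset (Finset.filter_subset _ _)]
  obtain ⟨b, hb⟩ := part_half_nonempty h hi (!a)
  rw [Finset.mem_filter] at hb
  refine ⟨b, hb.1, ?_⟩
  rw [Finset.mem_filter]
  rintro ⟨_, hba⟩
  rw [hba] at hb
  simp at hb

lemma pair_insert_eq {c : Box 2} (i : Fin 2) :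
    insert (expandBox i false c) (insert (expandBox i true c) (({c} : Finset (Box 2)).erase c))
      = {expandBox i false c, expandBox i true c} := by
  rw [Finset.erase_singleton]
  rfl

lemma expands_pair (c : Box 2) (i : Fin 2) :
    Expands {c} ({expandBox i false c, expandBox i true c} : Finset (Box 2)) := by
  refine Relation.ReflTransGen.single ⟨i, c, Finset.mem_singleton_self c, ?_⟩
  rw [pair_insert_eq]

lemma expands_of_isPartOf_box : ∀ (n : ℕ) (X : Finset (Box 2)) (c : Box 2), X.card = n →
    IsPartOf X (bs c) → Expands {c} X := by
  intro n
  induction n using Nat.strong_induction_on with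
  | _ n ih =>
    intro X c hcard h
    classical
    by_cases hc : c ∈ X
    · rw [part_eq_singleton h hc]
      exact Relation.ReflTransGen.refl
    · obtain ⟨i, hi⟩ := part_split h hc
      set m := (c i).length with hm
      set cf := expandBox i false c with hcfdef
      set ct := expandBox i true c with hctdef
      set Xf := X.filter (fun b => bitAt b i m = false) with hXf
      set Xt := X.filter (fun b => bitAt b i m = true) with hXt
      have hf := part_half h hi false
      have ht := part_half h hi true
      have hcf : Expands {cf} Xf :=
        ih Xf.card (hcard ▸ part_half_card_lt h hi false) Xf _ rfl hf
      have hct : Expands {ct} Xt :=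
        ih Xt.card (hcard ▸ part_half_card_lt h hi true) Xt _ rfl ht
      have step1 : Expands {c} ({cf, ct} : Finset (Box 2)) := expands_pair c i
      have hdisj : Disjoint (bs cf) (bs ct) := bs_split_disjoint i c
      have step2 : Expands ({cf} ∪ {ct}) (Xf ∪ {ct}) := by
        apply expands_union (S0 := bs cf) hcf
        · intro a ha
          rw [Finset.mem_singleton] at ha
          subst ha
          exact subset_rfl
        · intro t htm
          rw [Finset.mem_singleton] at htm
          subst htm
          exact hdisj.symm
      have step3 : Expands ({ct} ∪ Xf) (Xt ∪ Xf) := by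
        apply expands_union (S0 := bs ct) hct
        · intro a ha
          rw [Finset.mem_singleton] at ha
          subst ha
          exact subset_rfl
        · intro t htm
          exact Disjoint.mono_left (hf.subS t htm) hdisj
      have e1 : ({cf} ∪ {ct} : Finset (Box 2)) = {cf, ct} := rfl
      have e2 : Xf ∪ {ct} = {ct} ∪ Xf := Finset.union_comm _ _
      have e3 : Xt ∪ Xf = X := by
        rw [Finset.union_comm]
        exact part_filter_split X i m
      rw [e1] at step2
      rw [e2] at step2
      rw [e3] at step3
      exact (step1.trans step2).trans step3

-- sibling pairs
def lastBit (u : Word) : Bool := u.getD (u.length - 1) false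
def flipW (u : Word) : Word := u.dropLast ++ [!lastBit u]
def parentBox (i : Fin 2) (b : Box 2) : Box 2 := Function.update b i (b i).dropLast
def flipBox (i : Fin 2) (b : Box 2) : Box 2 := Function.update b i (flipW (b i))

lemma lastBit_concat (u : Word) (a : Bool) : lastBit (u ++ [a]) = a := by
  unfold lastBit
  have h1 : (u ++ [a]).length - 1 = u.length := by simp
  rw [h1]
  have hlt : u.length < (u ++ [a]).length := by simp
  rw [List.getD_eq_getElem _ _ hlt, List.getElem_append_right (le_refl u.length)]
  simp

lemma flipW_concat (u : Word) (a : Bool) : flipW (u ++ [a]) = u ++ [!a] := by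
  unfold flipW
  rw [List.dropLast_concat, lastBit_concat]

lemma exists_sibling : ∀ (n : ℕ) (X : Finset (Box 2)) (c : Box 2), X.card = n →
    IsPartOf X (bs c) → c ∉ X →
    ∃ b ∈ X, ∃ i : Fin 2, (b i) ≠ [] ∧ flipBox i b ∈ X ∧ BoxLE c (parentBox i b) := by
  intro n
  induction n using Nat.strong_induction_on with
  | _ n ih =>
    intro X c hcard h hc
    classical
    obtain ⟨i, hi⟩ := part_split h hc
    set m := (c i).length with hm
    set cf := expandBox i false c with hcfdef
    set ct := expandBox i true c with hctdef
    set Xf := X.filter (fun b => bitAt b i m = false) with hXf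
    set Xt := X.filter (fun b => bitAt b i m = true) with hXt
    have hf := part_half h hi false
    have ht := part_half h hi true
    by_cases hff : cf ∈ Xf
    case pos =>
      by_cases htt : ct ∈ Xt
      case pos =>
        -- the two halves are boxes of X: a sibling pair
        refine ⟨cf, Finset.filter_subset _ _ hff, i, ?_, ?_, ?_⟩
        · rw [hcfdef, expandBox_apply_self]
          simp
        · have : flipBox i cf = ct := by
            funext j
            by_cases hj : j = i
            · subst hj
              rw [flipBox, Function.update_self, hcfdef, hctdef,
                expandBox_apply_self, expandBox_apply_self, flipW_concat]
              simp
            · rw [flipBox, Function.update_of_ne hj, hcfdef, hctdef,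
                expandBox_apply_ne hj, expandBox_apply_ne hj]
          rw [this]
          exact Finset.filter_subset _ _ htt
        · have : parentBox i cf = c := by
            funext j
            by_cases hj : j = i
            · subst hj
              rw [parentBox, Function.update_self, hcfdef, expandBox_apply_self,
                List.dropLast_concat]
            · rw [parentBox, Function.update_of_ne hj, hcfdef, expandBox_apply_ne hj]
          rw [this]
          exact BoxLE.rfl
      case neg =>
        obtain ⟨b, hb, j, h1, h2, h3⟩ :=
          ih Xt.card (hcard ▸ part_half_card_lt h hi true) Xt ct rfl ht htt
        exact ⟨b, Finset.filter_subset _ _ hb, j, h1, Finset.filter_subset _ _ h2,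
          (boxLE_expandBox i true c).trans h3⟩
    case neg =>
      obtain ⟨b, hb, j, h1, h2, h3⟩ :=
        ih Xf.card (hcard ▸ part_half_card_lt h hi false) Xf cf rfl hf hff
      exact ⟨b, Finset.filter_subset _ _ hb, j, h1, Finset.filter_subset _ _ h2,
        (boxLE_expandBox i false c).trans h3⟩

-- refinement implies expansion
lemma expands_of_refines : ∀ (n : ℕ) (X Z : Finset (Box 2)) (S : Set Pt), X.card = n →
    IsPartOf X S → IsPartOf Z S → (∀ z ∈ Z, ∃ x ∈ X, BoxLE x z) → Expands X Z := by
  intro n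
  induction n using Nat.strong_induction_on with
  | _ n ih =>
    intro X Z S hcard hX hZ href
    classical
    rcases Finset.eq_empty_or_nonempty X with rfl | ⟨x0, hx0⟩
    · have hSempty : S = ∅ := by
        rw [Set.eq_empty_iff_forall_notMem]
        intro p hp
        obtain ⟨b, hb, _⟩ := hX.mem_of_pt hp
        exact absurd hb (Finset.notMem_empty b)
      have : Z = ∅ := by
        rw [Finset.eq_empty_iff_forall_notMem]
        intro z hz
        obtain ⟨p, hp⟩ := bs_nonempty z
        have := hZ.subS z hz hp
        rw [hSempty] at this
        exact this
      rw [this]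
      exact Relation.ReflTransGen.refl
    · set Zx := Z.filter (fun z => BoxLE x0 z) with hZx
      have hZxpart : IsPartOf Zx (bs x0) := by
        constructor
        · intro z hz
          exact bs_mono (Finset.mem_filter.mp hz).2
        · intro p hp
          obtain ⟨z, hz, hpz⟩ := hZ.mem_of_pt (hX.subS x0 hx0 hp)
          obtain ⟨x', hx', hle⟩ := href z hz
          have : x' = x0 := by
            apply hX.eq_of_meets hx' hx0
            exact ⟨p, bs_mono hle hpz, hp⟩
          subst this
          exact Set.mem_biUnion (Finset.mem_filter.mpr ⟨hz, hle⟩) hpz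
        · intro a ha b hb hne
          exact hZ.disj a (Finset.mem_filter.mp ha).1 b (Finset.mem_filter.mp hb).1 hne
      have hstep1 : Expands {x0} Zx := expands_of_isPartOf_box Zx.card Zx x0 rfl hZxpart
      set X' := X.erase x0 with hX'
      set Z' := Z.filter (fun z => ¬ BoxLE x0 z) with hZ'
      set S' := S \ bs x0 with hS'
      have hX'part : IsPartOf X' S' := by
        constructor
        · intro b hb
          intro p hp
          refine ⟨hX.subS b (Finset.mem_of_mem_erase hb) hp, ?_⟩
          intro hpx
          exact Set.disjoint_left.mp
            (hX.disj b (Finset.mem_of_mem_erase hb) x0 hx0 (Finset.mem_erase.mp hb).1) hp hpx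
        · rintro p ⟨hp, hpx⟩
          obtain ⟨b, hb, hpb⟩ := hX.mem_of_pt hp
          have hbne : b ≠ x0 := by
            rintro rfl
            exact hpx hpb
          exact Set.mem_biUnion (Finset.mem_erase.mpr ⟨hbne, hb⟩) hpb
        · intro a ha b hb hne
          exact hX.disj a (Finset.mem_of_mem_erase ha) b (Finset.mem_of_mem_erase hb) hne
      have hZ'part : IsPartOf Z' S' := by
        constructor
        · intro z hz
          intro p hp
          have hzZ := (Finset.mem_filter.mp hz).1
          refine ⟨hZ.subS z hzZ hp, ?_⟩
          intro hpx
          obtain ⟨x', hx', hle⟩ := href z hzZ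
          have hxne : x' ≠ x0 := by
            rintro rfl
            exact (Finset.mem_filter.mp hz).2 hle
          exact Set.disjoint_left.mp (hX.disj x' hx' x0 hx0 hxne) (bs_mono hle hp) hpx
        · rintro p ⟨hp, hpx⟩
          obtain ⟨z, hz, hpz⟩ := hZ.mem_of_pt hp
          have : z ∈ Z' := by
            rw [Finset.mem_filter]
            refine ⟨hz, fun hle => hpx (bs_mono hle hpz)⟩
          exact Set.mem_biUnion this hpz
        · intro a ha b hb hne
          exact hZ.disj a (Finset.mem_filter.mp ha).1 b (Finset.mem_filter.mp hb).1 hne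
      have href' : ∀ z ∈ Z', ∃ x ∈ X', BoxLE x z := by
        intro z hz
        obtain ⟨x', hx', hle⟩ := href z (Finset.mem_filter.mp hz).1
        have hxne : x' ≠ x0 := by
          rintro rfl
          exact (Finset.mem_filter.mp hz).2 hle
        exact ⟨x', Finset.mem_erase.mpr ⟨hxne, hx'⟩, hle⟩
      have hcard' : X'.card < n := by
        rw [← hcard, hX']
        exact Finset.card_erase_lt_of_mem hx0
      have hstep2 : Expands X' Z' := ih X'.card hcard' X' Z' S' rfl hX'part hZ'part href'
      -- assemble
      have hA : Expands ({x0} ∪ X') (Zx ∪ X') := by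
        apply expands_union (S0 := bs x0) hstep1
        · intro a ha
          rw [Finset.mem_singleton] at ha
          subst ha
          exact subset_rfl
        · intro t htm
          rw [Set.disjoint_right]
          intro p hpx hpt
          exact (hX'part.subS t htm hpt).2 hpx
      have hB : Expands (X' ∪ Zx) (Z' ∪ Zx) := by
        apply expands_union (S0 := S') hstep2
        · intro a ha
          exact hX'part.subS a ha
        · intro t htm
          rw [Set.disjoint_left]
          intro p hpt hps'
          exact hps'.2 (bs_mono (Finset.mem_filter.mp htm).2 hpt)
      have e1 : ({x0} ∪ X' : Finset (Box 2)) = X := by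
        rw [hX']
        rw [show ({x0} : Finset (Box 2)) ∪ X.erase x0 = insert x0 (X.erase x0) from rfl]
        rw [Finset.insert_erase hx0]
      have e2 : Zx ∪ X' = X' ∪ Zx := Finset.union_comm _ _
      have e3 : Z' ∪ Zx = Z := by
        rw [hZx, hZ', Finset.union_comm, Finset.filter_union_filter_not_eq]
      rw [e1, e2] at hA
      rw [e3] at hB
      exact hA.trans hB
-- ===== layer 3a : flip / parent / quad algebra, pair choice =====

lemma concat_rep {u : Word} (h : u ≠ []) : u.dropLast ++ [lastBit u] = u := by
  obtain ⟨v, a, rfl⟩ := (List.eq_nil_or_concat u).resolve_left h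
  rw [List.concat_eq_append] at *
  rw [List.dropLast_concat, lastBit_concat]

lemma flipW_flipW {u : Word} (h : u ≠ []) : flipW (flipW u) = u := by
  obtain ⟨v, a, rfl⟩ := (List.eq_nil_or_concat u).resolve_left h
  rw [List.concat_eq_append] at *
  rw [flipW_concat, flipW_concat, Bool.not_not]

lemma flipW_ne {u : Word} (h : u ≠ []) : flipW u ≠ u := by
  obtain ⟨v, a, rfl⟩ := (List.eq_nil_or_concat u).resolve_left h
  rw [List.concat_eq_append] at *
  rw [flipW_concat]
  intro hc
  have h2 := List.append_inj_right hc (by rfl)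
  have h3 : (!a) = a := by injection h2
  exact (Bool.not_ne_self a) h3

lemma flipW_ne_nil {u : Word} : flipW u ≠ [] := by
  unfold flipW
  simp

lemma length_flipW {u : Word} (h : u ≠ []) : (flipW u).length = u.length := by
  obtain ⟨v, a, rfl⟩ := (List.eq_nil_or_concat u).resolve_left h
  rw [List.concat_eq_append] at *
  rw [flipW_concat]
  simp

lemma dropLast_flipW {u : Word} (h : u ≠ []) : (flipW u).dropLast = u.dropLast := by
  obtain ⟨v, a, rfl⟩ := (List.eq_nil_or_concat u).resolve_left h
  rw [List.concat_eq_append] at *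
  rw [flipW_concat, List.dropLast_concat, List.dropLast_concat]

lemma dropLast_prefix_flipW (u : Word) : u.dropLast <+: flipW u := ⟨[!lastBit u], rfl⟩

-- coordinates
lemma parentBox_apply_self (i : Fin 2) (b : Box 2) : parentBox i b i = (b i).dropLast := by
  simp [parentBox]
lemma parentBox_apply_ne {i j : Fin 2} (h : j ≠ i) (b : Box 2) : parentBox i b j = b j := by
  simp [parentBox, Function.update_of_ne h]
lemma flipBox_apply_self (i : Fin 2) (b : Box 2) : flipBox i b i = flipW (b i) := by
  simp [flipBox]
lemma flipBox_apply_ne {i j : Fin 2} (h : j ≠ i) (b : Box 2) : flipBox i b j = b j := by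
  simp [flipBox, Function.update_of_ne h]

lemma flipBox_flipBox {i : Fin 2} {b : Box 2} (h : b i ≠ []) : flipBox i (flipBox i b) = b := by
  funext j
  by_cases hj : j = i
  · subst hj
    rw [flipBox_apply_self, flipBox_apply_self, flipW_flipW h]
  · rw [flipBox_apply_ne hj, flipBox_apply_ne hj]

lemma flipBox_ne {i : Fin 2} {b : Box 2} (h : b i ≠ []) : flipBox i b ≠ b := by
  intro hc
  have := congrFun hc i
  rw [flipBox_apply_self] at this
  exact flipW_ne h this

lemma flipBox_word_ne_nil {i : Fin 2} (b : Box 2) : flipBox i b i ≠ [] := by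
  rw [flipBox_apply_self]; exact flipW_ne_nil

lemma parentBox_flipBox (i : Fin 2) {b : Box 2} (h : b i ≠ []) :
    parentBox i (flipBox i b) = parentBox i b := by
  funext j
  by_cases hj : j = i
  · subst hj
    rw [parentBox_apply_self, parentBox_apply_self, flipBox_apply_self, dropLast_flipW h]
  · rw [parentBox_apply_ne hj, parentBox_apply_ne hj, flipBox_apply_ne hj]

lemma boxLE_parentBox (i : Fin 2) (b : Box 2) : BoxLE (parentBox i b) b := by
  intro j
  by_cases hj : j = i
  · subst hj
    rw [parentBox_apply_self]
    exact List.dropLast_prefix _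
  · rw [parentBox_apply_ne hj]

lemma depth_flipBox {i : Fin 2} {b : Box 2} (h : b i ≠ []) : depth (flipBox i b) = depth b := by
  rw [depth_two, depth_two]
  have h0 : ∀ j : Fin 2, (flipBox i b j).length = (b j).length := by
    intro j
    by_cases hj : j = i
    · subst hj; rw [flipBox_apply_self, length_flipW h]
    · rw [flipBox_apply_ne hj]
  rw [h0 0, h0 1]

lemma depth_parentBox_lt {i : Fin 2} {b : Box 2} (h : b i ≠ []) :
    depth (parentBox i b) < depth b := by
  rw [depth_two, depth_two]
  have hlen : ((b i).dropLast).length < (b i).length := by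
    rw [List.length_dropLast]
    have := List.length_pos_iff.mpr h
    omega
  have h0 : ∀ j : Fin 2, j ≠ i → (parentBox i b j).length = (b j).length := by
    intro j hj; rw [parentBox_apply_ne hj]
  rcases fin2_cases 0 1 (by decide) i with hi | hi
  · subst hi
    rw [parentBox_apply_self, h0 1 (by decide)]
    omega
  · subst hi
    rw [parentBox_apply_self, h0 0 (by decide)]
    omega

lemma bs_parentBox {i : Fin 2} {b : Box 2} (h : b i ≠ []) :
    bs (parentBox i b) = bs b ∪ bs (flipBox i b) := by
  have key : ∀ a : Bool, expandBox i a (parentBox i b) =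
      if a = lastBit (b i) then b else flipBox i b := by
    intro a
    by_cases ha : a = lastBit (b i)
    · subst ha
      rw [if_pos rfl]
      funext j
      by_cases hj : j = i
      · subst hj
        rw [expandBox_apply_self, parentBox_apply_self, concat_rep h]
      · rw [expandBox_apply_ne hj, parentBox_apply_ne hj]
    · rw [if_neg ha]
      have ha' : a = !lastBit (b i) := by
        rcases Bool.eq_false_or_eq_true a with h1 | h1 <;>
          rcases Bool.eq_false_or_eq_true (lastBit (b i)) with h2 | h2 <;>
            simp [h1, h2] at ha ⊢
      funext j
      by_cases hj : j = i
      · subst hj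
        rw [expandBox_apply_self, parentBox_apply_self, flipBox_apply_self, ha']
        rfl
      · rw [expandBox_apply_ne hj, parentBox_apply_ne hj, flipBox_apply_ne hj]
  rw [bs_split i (parentBox i b), key false, key true]
  rcases Bool.eq_false_or_eq_true (lastBit (b i)) with h1 | h1
  · rw [h1]
    rw [if_neg (by simp), if_pos rfl]
    exact Set.union_comm _ _
  · rw [h1]
    simp
-- ===== layer 3b : deepest compatible sibling pair =====
open scoped Classical

lemma part_restrict {A Y : Finset (Box 2)} (hA : IsPartOf A Set.univ)
    (hY : IsPartOf Y Set.univ) (href : ∀ y ∈ Y, ∃ a ∈ A, BoxLE a y) {a : Box 2} (ha : a ∈ A) :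
    IsPartOf (Y.filter (fun y => BoxLE a y)) (bs a) := by
  classical
  constructor
  · intro y hy
    exact bs_mono (Finset.mem_filter.mp hy).2
  · intro p hp
    obtain ⟨y, hy, hpy⟩ := hY.mem_of_pt (Set.mem_univ p)
    obtain ⟨a', ha', hle⟩ := href y hy
    have : a' = a := hA.eq_of_meets ha' ha ⟨p, bs_mono hle hpy, hp⟩
    subst this
    exact Set.mem_biUnion (Finset.mem_filter.mpr ⟨hy, hle⟩) hpy
  · intro c hc d hd hne
    exact hY.disj c (Finset.mem_filter.mp hc).1 d (Finset.mem_filter.mp hd).1 hne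

def goodPair (Y A : Finset (Box 2)) (z : Box 2 × Fin 2) : Prop :=
  z.1 ∈ Y ∧ flipBox z.2 z.1 ∈ Y ∧ z.1 z.2 ≠ [] ∧ ∃ a ∈ A, BoxLE a (parentBox z.2 z.1)

def maxPair (Y A : Finset (Box 2)) (z : Box 2 × Fin 2) : Prop :=
  goodPair Y A z ∧ ∀ w, goodPair Y A w → depth w.1 ≤ depth z.1

noncomputable def pb (Y A : Finset (Box 2)) : Box 2 × Fin 2 :=
  if h : ∃ z, maxPair Y A z then h.choose else default

lemma exists_maxPair {Y A : Finset (Box 2)} (hY : Admissible Y) (hA : Admissible A)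
    (hAY : Expands A Y) (hne : A ≠ Y) : ∃ z, maxPair Y A z := by
  classical
  have hYp := admissible_isPartOf hY
  have hAp := admissible_isPartOf hA
  have href : ∀ y ∈ Y, ∃ a ∈ A, BoxLE a y := fun y hy => expands_refines hAY y hy
  -- some block of A properly refined
  have hblock : ∃ a ∈ A, Y.filter (fun y => BoxLE a y) ≠ {a} := by
    by_contra hcon
    push_neg at hcon
    apply hne
    apply Finset.Subset.antisymm
    · intro a ha
      have := hcon a ha
      have : a ∈ Y.filter (fun y => BoxLE a y) := by
        rw [this]; exact Finset.mem_singleton_self a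
      exact (Finset.mem_filter.mp this).1
    · intro y hy
      obtain ⟨a, ha, hle⟩ := href y hy
      have hmem : y ∈ Y.filter (fun y => BoxLE a y) := Finset.mem_filter.mpr ⟨hy, hle⟩
      rw [hcon a ha] at hmem
      rw [Finset.mem_singleton.mp hmem]
      exact ha
  obtain ⟨a, ha, hane⟩ := hblock
  have hrestr := part_restrict hAp hYp href ha
  have hanotin : a ∉ Y.filter (fun y => BoxLE a y) := by
    intro hmem
    exact hane (part_eq_singleton hrestr hmem)
  obtain ⟨b, hb, i, h1, h2, h3⟩ :=
    exists_sibling (Y.filter (fun y => BoxLE a y)).card _ a rfl hrestr hanotin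
  have hgp : goodPair Y A (b, i) :=
    ⟨(Finset.mem_filter.mp hb).1, (Finset.mem_filter.mp h2).1, h1, a, ha, h3⟩
  -- maximise depth over the finite set of good pairs
  set GP := (Y ×ˢ (Finset.univ : Finset (Fin 2))).filter (fun z => goodPair Y A z) with hGP
  have hGPne : GP.Nonempty := ⟨(b, i), by
    rw [hGP, Finset.mem_filter]
    exact ⟨Finset.mem_product.mpr ⟨hgp.1, Finset.mem_univ _⟩, hgp⟩⟩
  obtain ⟨z, hz, hzmax⟩ := GP.exists_max_image (fun z => depth z.1) hGPne
  refine ⟨z, (Finset.mem_filter.mp hz).2, fun w hw => ?_⟩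
  apply hzmax
  rw [hGP, Finset.mem_filter]
  exact ⟨Finset.mem_product.mpr ⟨hw.1, Finset.mem_univ _⟩, hw⟩

lemma pb_spec {Y A : Finset (Box 2)} (hY : Admissible Y) (hA : Admissible A)
    (hAY : Expands A Y) (hne : A ≠ Y) : maxPair Y A (pb Y A) := by
  have h := exists_maxPair hY hA hAY hne
  rw [pb, dif_pos h]
  exact h.choose_spec
-- ===== layer 3c : regions and the quad lemma =====

def Good (Y A : Finset (Box 2)) : Prop := Admissible A ∧ Expands A Y ∧ A ≠ Y

def pairMem (Y A : Finset (Box 2)) (z : Box 2) : Prop :=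
  z = (pb Y A).1 ∨ z = flipBox (pb Y A).2 (pb Y A).1

def quadBox (b : Box 2) : Box 2 := fun j => (b j).dropLast

def conflict (Y : Finset (Box 2)) (σ : Finset (Finset (Box 2))) (A : Finset (Box 2)) : Prop :=
  ∃ A' ∈ σ, (pb Y A').2 ≠ (pb Y A).2 ∧ ∃ z, pairMem Y A z ∧ pairMem Y A' z

noncomputable def region (Y : Finset (Box 2)) (σ : Finset (Finset (Box 2)))
    (A : Finset (Box 2)) : Box 2 :=
  if conflict Y σ A then quadBox (pb Y A).1 else parentBox (pb Y A).2 (pb Y A).1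

noncomputable def Mdef (Y : Finset (Box 2)) (σ : Finset (Finset (Box 2))) : Finset (Box 2) :=
  Y.filter (fun y => ¬ ∃ A ∈ σ, BoxLE (region Y σ A) y) ∪ σ.image (region Y σ)

section Geometry

variable {Y : Finset (Box 2)}

lemma good_spec (hY : Admissible Y) {A : Finset (Box 2)} (hA : Good Y A) : maxPair Y A (pb Y A) :=
  pb_spec hY hA.1 hA.2.1 hA.2.2

-- basic facts about pair members
lemma pairMem_self {A : Finset (Box 2)} : pairMem Y A (pb Y A).1 := Or.inl rfl

lemma pairMem_mem (hY : Admissible Y) {A : Finset (Box 2)} (hA : Good Y A) {z : Box 2}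
    (hz : pairMem Y A z) : z ∈ Y := by
  rcases hz with rfl | rfl
  · exact (good_spec hY hA).1.1
  · exact (good_spec hY hA).1.2.1

lemma pairMem_ne_nil (hY : Admissible Y) {A : Finset (Box 2)} (hA : Good Y A) {z : Box 2}
    (hz : pairMem Y A z) : z (pb Y A).2 ≠ [] := by
  rcases hz with rfl | rfl
  · exact (good_spec hY hA).1.2.2.1
  · exact flipBox_word_ne_nil _

lemma pairMem_parent (hY : Admissible Y) {A : Finset (Box 2)} (hA : Good Y A) {z : Box 2}
    (hz : pairMem Y A z) :
    parentBox (pb Y A).2 z = parentBox (pb Y A).2 (pb Y A).1 := by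
  rcases hz with rfl | rfl
  · rfl
  · exact parentBox_flipBox _ ((good_spec hY hA).1.2.2.1)

lemma pairMem_flip (hY : Admissible Y) {A : Finset (Box 2)} (hA : Good Y A) {z : Box 2}
    (hz : pairMem Y A z) : pairMem Y A (flipBox (pb Y A).2 z) := by
  rcases hz with rfl | rfl
  · exact Or.inr rfl
  · exact Or.inl (flipBox_flipBox ((good_spec hY hA).1.2.2.1))

lemma pairMem_depth (hY : Admissible Y) {A : Finset (Box 2)} (hA : Good Y A) {z : Box 2}
    (hz : pairMem Y A z) : depth z = depth (pb Y A).1 := by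
  rcases hz with rfl | rfl
  · rfl
  · exact depth_flipBox ((good_spec hY hA).1.2.2.1)

lemma quadBox_flipBox {i : Fin 2} {b : Box 2} (h : b i ≠ []) :
    quadBox (flipBox i b) = quadBox b := by
  funext j
  by_cases hj : j = i
  · subst hj
    show (flipBox j b j).dropLast = (b j).dropLast
    rw [flipBox_apply_self, dropLast_flipW h]
  · show (flipBox i b j).dropLast = (b j).dropLast
    rw [flipBox_apply_ne hj]

lemma pairMem_quad (hY : Admissible Y) {A : Finset (Box 2)} (hA : Good Y A) {z : Box 2}
    (hz : pairMem Y A z) : quadBox z = quadBox (pb Y A).1 := by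
  rcases hz with rfl | rfl
  · rfl
  · exact quadBox_flipBox ((good_spec hY hA).1.2.2.1)

lemma meets_parent (hY : Admissible Y) {A : Finset (Box 2)} (hA : Good Y A) {y : Box 2} (hy : y ∈ Y)
    (hm : (bs y ∩ bs (parentBox (pb Y A).2 (pb Y A).1)).Nonempty) : pairMem Y A y := by
  have hYp := admissible_isPartOf hY
  rw [bs_parentBox ((good_spec hY hA).1.2.2.1)] at hm
  obtain ⟨p, hp1, hp2⟩ := hm
  rcases hp2 with hp2 | hp2
  · exact Or.inl (hYp.eq_of_meets hy (good_spec hY hA).1.1 ⟨p, hp1, hp2⟩)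
  · exact Or.inr (hYp.eq_of_meets hy (good_spec hY hA).1.2.1 ⟨p, hp1, hp2⟩)

-- quad structure
lemma flipBox_comm {i i' : Fin 2} (h : i ≠ i') (b : Box 2) :
    flipBox i' (flipBox i b) = flipBox i (flipBox i' b) := by
  funext j
  by_cases hj : j = i
  · subst hj
    rw [show flipBox i' (flipBox j b) j = flipBox j b j from flipBox_apply_ne h _]
    rw [flipBox_apply_self]
    rw [show flipBox j (flipBox i' b) j = flipW (flipBox i' b j) from flipBox_apply_self _ _]
    rw [show flipBox i' b j = b j from flipBox_apply_ne h _]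
  · by_cases hj' : j = i'
    · subst hj'
      rw [show flipBox j (flipBox i b) j = flipW (flipBox i b j) from flipBox_apply_self _ _]
      rw [show flipBox i b j = b j from flipBox_apply_ne (Ne.symm h) _]
      rw [show flipBox i (flipBox j b) j = flipBox j b j from flipBox_apply_ne (Ne.symm h) _]
      rw [flipBox_apply_self]
    · rw [show flipBox i' (flipBox i b) j = flipBox i b j from flipBox_apply_ne hj' _]
      rw [show flipBox i b j = b j from flipBox_apply_ne hj _]
      rw [show flipBox i (flipBox i' b) j = flipBox i' b j from flipBox_apply_ne hj _]
      rw [show flipBox i' b j = b j from flipBox_apply_ne hj' _]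

lemma quadBox_eq_parent_parent {i i' : Fin 2} (h : i ≠ i') (b : Box 2) :
    quadBox b = parentBox i (parentBox i' b) := by
  funext j
  by_cases hj : j = i
  · subst hj
    rw [parentBox_apply_self]
    rw [show parentBox i' b j = b j from parentBox_apply_ne h b]
    rfl
  · have hj' : j = i' := (fin2_cases i i' h j).resolve_left hj
    subst hj'
    rw [show parentBox i (parentBox j b) j = parentBox j b j from parentBox_apply_ne hj _]
    rw [parentBox_apply_self]
    rfl

lemma bs_quadBox {i i' : Fin 2} (h : i ≠ i') {b : Box 2} (hbi : b i ≠ []) (hbi' : b i' ≠ []) :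
    bs (quadBox b) = (bs b ∪ bs (flipBox i' b)) ∪
      (bs (flipBox i b) ∪ bs (flipBox i' (flipBox i b))) := by
  rw [quadBox_eq_parent_parent h b]
  have h1 : parentBox i' b i = b i := parentBox_apply_ne h b
  have hX : (parentBox i' b) i ≠ [] := by rw [h1]; exact hbi
  rw [bs_parentBox hX]
  have e1 : bs (parentBox i' b) = bs b ∪ bs (flipBox i' b) := bs_parentBox hbi'
  have ecomm : flipBox i (parentBox i' b) = parentBox i' (flipBox i b) := by
    funext j
    by_cases hj : j = i
    · subst hj
      rw [flipBox_apply_self]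
      rw [show parentBox i' b j = b j from parentBox_apply_ne h _]
      rw [show parentBox i' (flipBox j b) j = flipBox j b j from parentBox_apply_ne h _]
      rw [flipBox_apply_self]
    · have hj' : j = i' := (fin2_cases i i' h j).resolve_left hj
      subst hj'
      rw [show flipBox i (parentBox j b) j = parentBox j b j from flipBox_apply_ne (Ne.symm h) _]
      rw [parentBox_apply_self, parentBox_apply_self]
      rw [show flipBox i b j = b j from flipBox_apply_ne (Ne.symm h) _]
  have e2 : bs (flipBox i (parentBox i' b)) =
      bs (flipBox i b) ∪ bs (flipBox i' (flipBox i b)) := by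
    rw [ecomm]
    exact bs_parentBox (by
      rw [show flipBox i b i' = b i' from flipBox_apply_ne (Ne.symm h) _]
      exact hbi')
  rw [e1, e2]

lemma boxLE_quadBox_cell {b c : Box 2} (hc : ∀ j, c j = b j ∨ c j = flipW (b j)) :
    BoxLE (quadBox b) c := by
  intro j
  rcases hc j with h | h
  · rw [h]; exact List.dropLast_prefix _
  · rw [h]; exact dropLast_prefix_flipW _

end Geometry
-- ===== layer 3d : the fourth-cell lemma =====

lemma prefix_dropLast_of_short {v u : Word} (h : v <+: u) (hlen : v.length < u.length) :
    v <+: u.dropLast := by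
  apply List.prefix_of_prefix_length_le h (List.dropLast_prefix u)
  rw [List.length_dropLast]
  omega

section Quad

variable {Y : Finset (Box 2)}

lemma quad_block {Am : Finset (Box 2)} (hAmp : IsPartOf Am Set.univ) {i i' : Fin 2}
    (hii : i ≠ i') {z0 : Box 2}
    (h1 : ∃ a ∈ Am, BoxLE a (parentBox i z0)) (h2 : ∃ a ∈ Am, BoxLE a (parentBox i' z0)) :
    ∃ a ∈ Am, BoxLE a (quadBox z0) := by
  obtain ⟨a1, ha1, hle1⟩ := h1
  obtain ⟨a2, ha2, hle2⟩ := h2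
  have hmeet : (bs a1 ∩ bs a2).Nonempty := by
    obtain ⟨p, hp⟩ := bs_nonempty z0
    exact ⟨p, bs_mono hle1 (bs_mono (boxLE_parentBox i z0) hp),
      bs_mono hle2 (bs_mono (boxLE_parentBox i' z0) hp)⟩
  have heq : a1 = a2 := hAmp.eq_of_meets ha1 ha2 hmeet
  subst heq
  refine ⟨a1, ha1, fun j => ?_⟩
  rcases fin2_cases i i' hii j with rfl | rfl
  · have := hle1 j
    rwa [parentBox_apply_self] at this
  · have := hle2 j
    rwa [parentBox_apply_self] at this

lemma quad_fourth (hY : Admissible Y) {A A' : Finset (Box 2)} (hA : Good Y A)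
    (hA' : Good Y A') (hAA' : Expands A A') {z0 : Box 2}
    (h0 : pairMem Y A z0) (h0' : pairMem Y A' z0)
    (hii : (pb Y A').2 ≠ (pb Y A).2) :
    flipBox (pb Y A').2 (flipBox (pb Y A).2 z0) ∈ Y := by
  classical
  have hYp := admissible_isPartOf hY
  set i := (pb Y A).2 with hidef
  set i' := (pb Y A').2 with hi'def
  have hii' : i ≠ i' := Ne.symm hii
  have hz0i : z0 i ≠ [] := pairMem_ne_nil hY hA h0
  have hz0i' : z0 i' ≠ [] := pairMem_ne_nil hY hA' h0'
  set Q4 := flipBox i' (flipBox i z0) with hQ4def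
  have hQ4i : Q4 i = flipW (z0 i) := by
    rw [hQ4def, show flipBox i' (flipBox i z0) i = flipBox i z0 i from flipBox_apply_ne hii' _,
      flipBox_apply_self]
  have hQ4i' : Q4 i' = flipW (z0 i') := by
    rw [hQ4def, flipBox_apply_self,
      show flipBox i z0 i' = z0 i' from flipBox_apply_ne (Ne.symm hii') _]
  set c2 := flipBox i z0 with hc2def
  set c3 := flipBox i' z0 with hc3def
  have hc2Y : c2 ∈ Y := pairMem_mem hY hA (pairMem_flip hY hA h0)
  have hc3Y : c3 ∈ Y := pairMem_mem hY hA' (pairMem_flip hY hA' h0')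
  have hz0Y : z0 ∈ Y := pairMem_mem hY hA h0
  have hc2i : c2 i = flipW (z0 i) := by rw [hc2def, flipBox_apply_self]
  have hc2i' : c2 i' = z0 i' := by
    rw [hc2def]; exact flipBox_apply_ne (Ne.symm hii') _
  have hc3i : c3 i = z0 i := by
    rw [hc3def]; exact flipBox_apply_ne hii' _
  have hc3i' : c3 i' = flipW (z0 i') := by rw [hc3def, flipBox_apply_self]
  -- any Y-box meeting Q4 is inside it
  have hmeets : ∀ z ∈ Y, (bs z ∩ bs Q4).Nonempty → BoxLE Q4 z := by
    intro z hz hm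
    have hcomp := bs_inter_nonempty_iff.mp hm
    have core : ∀ (j j' : Fin 2), j ≠ j' → ∀ c : Box 2, c ∈ Y → c j = z0 j → c j' = Q4 j' →
        Q4 j = flipW (z0 j) → z0 j ≠ [] → Q4 j <+: z j := by
      intro j j' hjj' c hcY hcj hcj' hQj hzj
      rcases hcomp j with h | h
      swap
      · exact h
      rcases le_or_gt (Q4 j).length ((z j)).length with hl | hl
      · rw [show Q4 j = z j from (h.eq_of_length (le_antisymm h.length_le hl)).symm]
      · have hzd : z j <+: (z0 j).dropLast := by
          have h2 : z j <+: (Q4 j).dropLast := prefix_dropLast_of_short h hl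
          rwa [hQj, dropLast_flipW hzj] at h2
        have hzc : (bs z ∩ bs c).Nonempty := by
          rw [bs_inter_nonempty_iff]
          intro k
          rcases fin2_cases j j' hjj' k with hk | hk
          · left
            rw [hk, hcj]
            exact hzd.trans (List.dropLast_prefix _)
          · rw [hk, hcj']
            exact hcomp j'
        have hzce : z = c := hYp.eq_of_meets hz hcY hzc
        have hzz0 : z j = z0 j := by rw [hzce, hcj]
        exfalso
        have hlen2 := hzd.length_le
        rw [hzz0, List.length_dropLast] at hlen2
        have := List.length_pos_iff.mpr hzj
        omega
    intro k
    rcases fin2_cases i i' hii' k with hk | hk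
    · rw [hk]
      exact core i i' hii' c3 hc3Y hc3i (by rw [hc3i', hQ4i']) hQ4i hz0i
    · rw [hk]
      exact core i' i (Ne.symm hii') c2 hc2Y hc2i' (by rw [hc2i, hQ4i]) hQ4i' hz0i'
  -- the Y-boxes inside Q4 partition it
  set YQ := Y.filter (fun z => BoxLE Q4 z) with hYQ
  have hYQpart : IsPartOf YQ (bs Q4) := by
    constructor
    · intro z hz
      exact bs_mono (Finset.mem_filter.mp hz).2
    · intro p hp
      obtain ⟨z, hz, hpz⟩ := hYp.mem_of_pt (Set.mem_univ p)
      have : z ∈ YQ := Finset.mem_filter.mpr ⟨hz, hmeets z hz ⟨p, hpz, hp⟩⟩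
      exact Set.mem_biUnion this hpz
    · intro a ha b hb hne
      exact hYp.disj a (Finset.mem_filter.mp ha).1 b (Finset.mem_filter.mp hb).1 hne
  by_cases hQ4in : Q4 ∈ YQ
  · exact (Finset.mem_filter.mp hQ4in).1
  · exfalso
    obtain ⟨w, hw, j, hwj, hwflip, hwpar⟩ := exists_sibling YQ.card YQ Q4 rfl hYQpart hQ4in
    -- block of A containing the quad
    have hblock : ∃ a ∈ A, BoxLE a (quadBox z0) := by
      apply quad_block (admissible_isPartOf hA.1) hii'
      · obtain ⟨a, ha, hle⟩ := (good_spec hY hA).1.2.2.2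
        refine ⟨a, ha, ?_⟩
        rwa [← pairMem_parent hY hA h0] at hle
      · obtain ⟨a', ha', hle⟩ := (good_spec hY hA').1.2.2.2
        obtain ⟨a, ha, hle2⟩ := expands_refines hAA' a' ha'
        refine ⟨a, ha, ?_⟩
        rw [← hi'def, ← pairMem_parent hY hA' h0'] at hle
        exact hle2.trans hle
    obtain ⟨a, ha, haq⟩ := hblock
    -- (w, j) is a good pair for A
    have hQ4le : BoxLE (quadBox z0) Q4 := by
      apply boxLE_quadBox_cell
      intro k
      rcases fin2_cases i i' hii' k with rfl | rfl
      · right; exact hQ4i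
      · right; exact hQ4i'
    have hgw : goodPair Y A (w, j) := by
      refine ⟨(Finset.mem_filter.mp hw).1, (Finset.mem_filter.mp hwflip).1, hwj, a, ha, ?_⟩
      exact (haq.trans hQ4le).trans hwpar
    have hmax := (good_spec hY hA).2 (w, j) hgw
    -- but w is strictly deeper than Q4
    have hwQ4 : BoxLE Q4 w := (Finset.mem_filter.mp hw).2
    have hwne : w ≠ Q4 := by
      rintro rfl
      exact hQ4in hw
    have hdepthlt : depth Q4 < depth w := by
      rcases lt_or_ge (depth Q4) (depth w) with h | h
      · exact h
      · exact absurd (eq_of_boxLE_depth hwQ4 h).symm hwne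
    have hdQ4 : depth Q4 = depth z0 := by
      rw [hQ4def]
      rw [depth_flipBox (by rw [hc2i']; exact hz0i')]
      rw [hc2def]
      exact depth_flipBox hz0i
    have hdz0 : depth z0 = depth (pb Y A).1 := pairMem_depth hY hA h0
    simp only at hmax
    omega
end Quad
-- ===== layer 3e : cells of a conflict quad =====

def Cellp (z0 : Box 2) (i i' : Fin 2) (y : Box 2) : Prop :=
  y = z0 ∨ y = flipBox i z0 ∨ y = flipBox i' z0 ∨ y = flipBox i' (flipBox i z0)

section Cells

variable {Y : Finset (Box 2)}

lemma pairMem_of_rel (hY : Admissible Y) {A : Finset (Box 2)} (hA : Good Y A) {y w : Box 2}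
    (hy : pairMem Y A y) (hw : w = y ∨ w = flipBox (pb Y A).2 y) : pairMem Y A w := by
  rcases hw with rfl | rfl
  · exact hy
  · exact pairMem_flip hY hA hy

lemma cellp_quadBox {z0 : Box 2} {i i' : Fin 2} (hii : i ≠ i') (hzi : z0 i ≠ [])
    (hzi' : z0 i' ≠ []) {y : Box 2} (hy : Cellp z0 i i' y) : quadBox y = quadBox z0 := by
  rcases hy with hc | hc | hc | hc <;> rw [hc]
  · exact quadBox_flipBox hzi
  · exact quadBox_flipBox hzi'
  · rw [quadBox_flipBox (by
      rw [show flipBox i z0 i' = z0 i' from flipBox_apply_ne (Ne.symm hii) _]; exact hzi')]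
    exact quadBox_flipBox hzi

lemma cellp_boxLE {z0 : Box 2} {i i' : Fin 2} (hii : i ≠ i') {y : Box 2}
    (hy : Cellp z0 i i' y) : BoxLE (quadBox z0) y := by
  apply boxLE_quadBox_cell
  intro j
  rcases hy with hc | hc | hc | hc <;> rw [hc]
  · left; rfl
  · rcases fin2_cases i i' hii j with hj | hj
    · rw [hj]; right; rw [flipBox_apply_self]
    · rw [hj]; left; exact flipBox_apply_ne (Ne.symm hii) _
  · rcases fin2_cases i i' hii j with hj | hj
    · rw [hj]; left; exact flipBox_apply_ne hii _
    · rw [hj]; right; rw [flipBox_apply_self]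
  · rcases fin2_cases i i' hii j with hj | hj
    · rw [hj]; right
      rw [show flipBox i' (flipBox i z0) i = flipBox i z0 i from flipBox_apply_ne hii _]
      rw [flipBox_apply_self]
    · rw [hj]; right
      rw [flipBox_apply_self]
      rw [show flipBox i z0 i' = z0 i' from flipBox_apply_ne (Ne.symm hii) _]

lemma cellp_swap {z0 : Box 2} {i i' : Fin 2} (hii : i ≠ i') {y : Box 2}
    (hy : Cellp z0 i i' y) : Cellp z0 i' i y := by
  rcases hy with hc | hc | hc | hc <;> rw [hc]
  · exact Or.inl rfl
  · exact Or.inr (Or.inr (Or.inl rfl))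
  · exact Or.inr (Or.inl rfl)
  · exact Or.inr (Or.inr (Or.inr (flipBox_comm hii z0)))

lemma cellp_share {z0 : Box 2} {i i' : Fin 2} (hii : i ≠ i') (hzi : z0 i ≠ [])
    {y : Box 2} (hy : Cellp z0 i i' y) :
    ∃ w, (w = y ∨ w = flipBox i y) ∧ (w = z0 ∨ w = flipBox i' z0) := by
  rcases hy with hc | hc | hc | hc <;> rw [hc]
  · exact ⟨z0, Or.inl rfl, Or.inl rfl⟩
  · exact ⟨z0, Or.inr (flipBox_flipBox hzi).symm, Or.inl rfl⟩
  · exact ⟨flipBox i' z0, Or.inl rfl, Or.inr rfl⟩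
  · refine ⟨flipBox i' z0, Or.inr ?_, Or.inr rfl⟩
    rw [← flipBox_comm hii, flipBox_flipBox hzi]

lemma mem_bs_quad_cases {z0 : Box 2} {i i' : Fin 2} (hii : i ≠ i') (hzi : z0 i ≠ [])
    (hzi' : z0 i' ≠ []) {p : Pt} (hp : p ∈ bs (quadBox z0)) :
    ∃ y, Cellp z0 i i' y ∧ p ∈ bs y := by
  rw [bs_quadBox hii hzi hzi'] at hp
  rcases hp with (hp | hp) | (hp | hp)
  · exact ⟨z0, Or.inl rfl, hp⟩
  · exact ⟨flipBox i' z0, Or.inr (Or.inr (Or.inl rfl)), hp⟩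
  · exact ⟨flipBox i z0, Or.inr (Or.inl rfl), hp⟩
  · exact ⟨flipBox i' (flipBox i z0), Or.inr (Or.inr (Or.inr rfl)), hp⟩

lemma cell_of_meets_quad (hY : Admissible Y) {z0 : Box 2} {i i' : Fin 2} (hii : i ≠ i')
    (hzi : z0 i ≠ []) (hzi' : z0 i' ≠ [])
    (hcells : ∀ w, Cellp z0 i i' w → w ∈ Y) {y : Box 2} (hy : y ∈ Y)
    (hm : (bs y ∩ bs (quadBox z0)).Nonempty) : Cellp z0 i i' y := by
  obtain ⟨p, hp1, hp2⟩ := hm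
  obtain ⟨w, hw, hpw⟩ := mem_bs_quad_cases hii hzi hzi' hp2
  have : y = w := (admissible_isPartOf hY).eq_of_meets hy (hcells w hw) ⟨p, hp1, hpw⟩
  rw [this]
  exact hw

-- conflict data
lemma conflict_data (hY : Admissible Y) {σ : Finset (Finset (Box 2))}
    (hσg : ∀ A ∈ σ, Good Y A)
    (hσc : IsChain (fun A B => Expands A B) (σ : Set (Finset (Box 2))))
    {A : Finset (Box 2)} (hAσ : A ∈ σ) (hc : conflict Y σ A) :
    ∃ (z0 : Box 2) (i' : Fin 2), i' ≠ (pb Y A).2 ∧ pairMem Y A z0 ∧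
      z0 (pb Y A).2 ≠ [] ∧ z0 i' ≠ [] ∧
      (∀ w, Cellp z0 (pb Y A).2 i' w → w ∈ Y) ∧
      region Y σ A = quadBox z0 ∧
      (∃ A' ∈ σ, (pb Y A').2 = i' ∧ pairMem Y A' z0) := by
  obtain ⟨A', hA'σ, hne, z0, hz0A, hz0A'⟩ := hc
  have hA := hσg A hAσ
  have hA' := hσg A' hA'σ
  set i := (pb Y A).2
  set i' := (pb Y A').2
  have hzi : z0 i ≠ [] := pairMem_ne_nil hY hA hz0A
  have hzi' : z0 i' ≠ [] := pairMem_ne_nil hY hA' hz0A'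
  have hAA' : A ≠ A' := by
    rintro rfl
    exact hne rfl
  have hfourth : flipBox i' (flipBox i z0) ∈ Y := by
    rcases hσc hAσ hA'σ hAA' with hcomp | hcomp
    · exact quad_fourth hY hA hA' hcomp hz0A hz0A' hne
    · have := quad_fourth hY hA' hA hcomp hz0A' hz0A (Ne.symm hne)
      rwa [← flipBox_comm (Ne.symm hne)] at this
  refine ⟨z0, i', hne, hz0A, hzi, hzi', ?_, ?_, A', hA'σ, rfl, hz0A'⟩
  · intro w hw
    rcases hw with hc | hc | hc | hc <;> rw [hc]
    · exact pairMem_mem hY hA hz0A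
    · exact pairMem_mem hY hA (pairMem_flip hY hA hz0A)
    · exact pairMem_mem hY hA' (pairMem_flip hY hA' hz0A')
    · exact hfourth
  · rw [region, if_pos ⟨A', hA'σ, hne, z0, hz0A, hz0A'⟩]
    exact (pairMem_quad hY hA hz0A).symm

lemma region_noconflict {σ : Finset (Finset (Box 2))} {A : Finset (Box 2)}
    (h : ¬ conflict Y σ A) : region Y σ A = parentBox (pb Y A).2 (pb Y A).1 := by
  rw [region, if_neg h]

lemma boxLE_quad_parent (i : Fin 2) (b : Box 2) : BoxLE (quadBox b) (parentBox i b) := by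
  intro j
  by_cases hj : j = i
  · subst hj
    rw [parentBox_apply_self]
    exact List.prefix_rfl
  · rw [parentBox_apply_ne hj]
    exact List.dropLast_prefix _

lemma region_mono {σ σ' : Finset (Finset (Box 2))} (hsub : σ' ⊆ σ) (A : Finset (Box 2)) :
    BoxLE (region Y σ A) (region Y σ' A) := by
  classical
  by_cases h' : conflict Y σ' A
  · have h : conflict Y σ A := by
      obtain ⟨B, hB, h1, h2⟩ := h'
      exact ⟨B, hsub hB, h1, h2⟩
    rw [region, if_pos h, region, if_pos h']
    exact BoxLE.rfl
  · rw [region_noconflict h']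
    by_cases h : conflict Y σ A
    · rw [region, if_pos h]
      exact boxLE_quad_parent _ _
    · rw [region_noconflict h]
      exact BoxLE.rfl

lemma boxLE_region_pair (hY : Admissible Y) {σ : Finset (Finset (Box 2))}
    {A : Finset (Box 2)} (hA : Good Y A) {y : Box 2} (hy : pairMem Y A y) :
    BoxLE (region Y σ A) y := by
  classical
  have hpar : BoxLE (parentBox (pb Y A).2 (pb Y A).1) y := by
    rw [← pairMem_parent hY hA hy]
    exact boxLE_parentBox _ _
  by_cases h : conflict Y σ A
  · rw [region, if_pos h]
    exact (boxLE_quad_parent _ _).trans hpar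
  · rw [region_noconflict h]
    exact hpar

end Cells
-- ===== layer 4 : the partition M(σ) =====
section MDef

variable {Y : Finset (Box 2)} {σ : Finset (Finset (Box 2))}

lemma mem_bs_region_pair (hY : Admissible Y) {A : Finset (Box 2)} (hA : Good Y A)
    (hnc : ¬ conflict Y σ A) {p : Pt} (hp : p ∈ bs (region Y σ A)) :
    ∃ yA, pairMem Y A yA ∧ p ∈ bs yA := by
  rw [region_noconflict hnc, bs_parentBox ((good_spec hY hA).1.2.2.1)] at hp
  rcases hp with hp | hp
  · exact ⟨_, pairMem_self, hp⟩
  · exact ⟨_, pairMem_flip hY hA pairMem_self, hp⟩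

lemma no_pair_quad_meet (hY : Admissible Y) (hσg : ∀ A ∈ σ, Good Y A)
    (hσc : IsChain (fun A B => Expands A B) (σ : Set (Finset (Box 2))))
    {A B : Finset (Box 2)} (hAσ : A ∈ σ) (hBσ : B ∈ σ)
    (hcA : ¬ conflict Y σ A) (hcB : conflict Y σ B)
    (hm : (bs (region Y σ A) ∩ bs (region Y σ B)).Nonempty) : False := by
  classical
  have hA := hσg A hAσ
  have hB := hσg B hBσ
  obtain ⟨p, hp1, hp2⟩ := hm
  obtain ⟨yA, hyA, hpyA⟩ := mem_bs_region_pair hY hA hcA hp1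
  obtain ⟨z0, i', hne, hz0B, hzi, hzi', hcells, hreg, A', hA'σ, hA'dir, hz0A'⟩ :=
    conflict_data hY hσg hσc hBσ hcB
  set iB := (pb Y B).2
  have hyAY : yA ∈ Y := pairMem_mem hY hA hyA
  have hcell : Cellp z0 iB i' yA := by
    apply cell_of_meets_quad hY (Ne.symm hne) hzi hzi' hcells hyAY
    rw [← hreg]
    exact ⟨p, hpyA, hp2⟩
  set iA := (pb Y A).2
  rcases fin2_cases iB i' (Ne.symm hne) iA with hiA | hiA
  · -- iA = iB : conflict via A'
    obtain ⟨w, hw1, hw2⟩ := cellp_share (Ne.symm hne) hzi hcell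
    apply hcA
    refine ⟨A', hA'σ, by rw [hA'dir]; exact fun hco => hne (hco.trans hiA), w, ?_, ?_⟩
    · apply pairMem_of_rel hY hA hyA
      rw [show (pb Y A).2 = iB from hiA]
      exact hw1
    · apply pairMem_of_rel hY (hσg A' hA'σ) hz0A'
      rw [hA'dir]
      exact hw2
  · -- iA = i' : conflict via B
    obtain ⟨w, hw1, hw2⟩ := cellp_share (Ne.symm (Ne.symm hne)) hzi' (cellp_swap (Ne.symm hne) hcell)
    apply hcA
    refine ⟨B, hBσ, fun hco => (Ne.symm hne) (hco.trans hiA), w, ?_, ?_⟩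
    · apply pairMem_of_rel hY hA hyA
      rw [show (pb Y A).2 = i' from hiA]
      exact hw1
    · exact pairMem_of_rel hY hB hz0B hw2

lemma region_eq_of_meets (hY : Admissible Y) (hσg : ∀ A ∈ σ, Good Y A)
    (hσc : IsChain (fun A B => Expands A B) (σ : Set (Finset (Box 2))))
    {A B : Finset (Box 2)} (hAσ : A ∈ σ) (hBσ : B ∈ σ)
    (hm : (bs (region Y σ A) ∩ bs (region Y σ B)).Nonempty) :
    region Y σ A = region Y σ B := by
  classical
  have hA := hσg A hAσ
  have hB := hσg B hBσ
  by_cases hcA : conflict Y σ A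
  · by_cases hcB : conflict Y σ B
    · -- both quads
      obtain ⟨zA, iA', hneA, hzA, hziA, hziA', hcellsA, hregA, _⟩ :=
        conflict_data hY hσg hσc hAσ hcA
      obtain ⟨zB, iB', hneB, hzB, hziB, hziB', hcellsB, hregB, _⟩ :=
        conflict_data hY hσg hσc hBσ hcB
      obtain ⟨p, hp1, hp2⟩ := hm
      rw [hregA] at hp1
      obtain ⟨yA, hyA, hpyA⟩ := mem_bs_quad_cases (Ne.symm hneA) hziA hziA' hp1
      have hyAY : yA ∈ Y := hcellsA yA hyA
      have hcellB : Cellp zB (pb Y B).2 iB' yA := by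
        apply cell_of_meets_quad hY (Ne.symm hneB) hziB hziB' hcellsB hyAY
        rw [← hregB]
        exact ⟨p, hpyA, hp2⟩
      rw [hregA, hregB,
        ← cellp_quadBox (Ne.symm hneA) hziA hziA' hyA,
        ← cellp_quadBox (Ne.symm hneB) hziB hziB' hcellB]
    · exact absurd (no_pair_quad_meet hY hσg hσc hBσ hAσ hcB  hcA
        ⟨hm.choose, hm.choose_spec.2, hm.choose_spec.1⟩) not_false
  · by_cases hcB : conflict Y σ B
    · exact absurd (no_pair_quad_meet hY hσg hσc hAσ hBσ hcA hcB hm) not_false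
    · -- both pairs
      obtain ⟨p, hp1, hp2⟩ := hm
      obtain ⟨yA, hyA, hpyA⟩ := mem_bs_region_pair hY hA hcA hp1
      have hyAY : yA ∈ Y := pairMem_mem hY hA hyA
      have hyAB : pairMem Y B yA := by
        apply meets_parent hY hB hyAY
        rw [← region_noconflict hcB]
        exact ⟨p, hpyA, hp2⟩
      by_cases hd : (pb Y B).2 = (pb Y A).2
      · rw [region_noconflict hcA, region_noconflict hcB,
          ← pairMem_parent hY hA hyA, ← pairMem_parent hY hB hyAB, hd]
      · exact absurd ⟨B, hBσ, hd, yA, hyA, hyAB⟩ hcA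

lemma boxLE_region_of_meets (hY : Admissible Y) (hσg : ∀ A ∈ σ, Good Y A)
    (hσc : IsChain (fun A B => Expands A B) (σ : Set (Finset (Box 2))))
    {A : Finset (Box 2)} (hAσ : A ∈ σ) {y : Box 2} (hy : y ∈ Y)
    (hm : (bs y ∩ bs (region Y σ A)).Nonempty) : BoxLE (region Y σ A) y := by
  classical
  by_cases hc : conflict Y σ A
  · obtain ⟨z0, i', hne, hz0A, hzi, hzi', hcells, hreg, _⟩ :=
      conflict_data hY hσg hσc hAσ hc
    rw [hreg] at hm ⊢
    exact cellp_boxLE (Ne.symm hne) (cell_of_meets_quad hY (Ne.symm hne) hzi hzi' hcells hy hm)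
  · have := meets_parent hY (hσg A hAσ) hy (by rwa [← region_noconflict hc])
    exact boxLE_region_pair hY (hσg A hAσ) this

lemma Mdef_isPart (hY : Admissible Y) (hσg : ∀ A ∈ σ, Good Y A)
    (hσc : IsChain (fun A B => Expands A B) (σ : Set (Finset (Box 2)))) :
    IsPartOf (Mdef Y σ) Set.univ := by
  classical
  have hYp := admissible_isPartOf hY
  constructor
  · intro b _; exact Set.subset_univ _
  · intro p _
    obtain ⟨y, hy, hpy⟩ := hYp.mem_of_pt (Set.mem_univ p)
    by_cases hk : ∃ A ∈ σ, BoxLE (region Y σ A) y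
    · obtain ⟨A, hAσ, hle⟩ := hk
      refine Set.mem_biUnion (Finset.mem_union_right _ (Finset.mem_image_of_mem _ hAσ))
        (bs_mono hle hpy)
    · exact Set.mem_biUnion (Finset.mem_union_left _ (Finset.mem_filter.mpr ⟨hy, hk⟩)) hpy
  · intro b hb c hc hne
    rw [Set.disjoint_left]
    intro p hpb hpc
    rw [Mdef, Finset.mem_union] at hb hc
    rcases hb with hb | hb <;> rcases hc with hc | hc
    · exact Set.disjoint_left.mp
        (hYp.disj b (Finset.mem_filter.mp hb).1 c (Finset.mem_filter.mp hc).1 hne) hpb hpc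
    · obtain ⟨B, hBσ, rfl⟩ := Finset.mem_image.mp hc
      exact (Finset.mem_filter.mp hb).2 ⟨B, hBσ,
        boxLE_region_of_meets hY hσg hσc hBσ (Finset.mem_filter.mp hb).1 ⟨p, hpb, hpc⟩⟩
    · obtain ⟨B, hBσ, rfl⟩ := Finset.mem_image.mp hb
      exact (Finset.mem_filter.mp hc).2 ⟨B, hBσ,
        boxLE_region_of_meets hY hσg hσc hBσ (Finset.mem_filter.mp hc).1 ⟨p, hpc, hpb⟩⟩
    · obtain ⟨B, hBσ, rfl⟩ := Finset.mem_image.mp hb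
      obtain ⟨C, hCσ, rfl⟩ := Finset.mem_image.mp hc
      exact hne (region_eq_of_meets hY hσg hσc hBσ hCσ ⟨p, hpb, hpc⟩)

lemma Mdef_refines_Y (hY : Admissible Y) :
    ∀ y ∈ Y, ∃ m ∈ Mdef Y σ, BoxLE m y := by
  classical
  intro y hy
  by_cases hk : ∃ A ∈ σ, BoxLE (region Y σ A) y
  · obtain ⟨A, hAσ, hle⟩ := hk
    exact ⟨region Y σ A, Finset.mem_union_right _ (Finset.mem_image_of_mem _ hAσ), hle⟩
  · exact ⟨y, Finset.mem_union_left _ (Finset.mem_filter.mpr ⟨hy, hk⟩), BoxLE.rfl⟩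

lemma Mdef_mono (hY : Admissible Y) {σ' : Finset (Finset (Box 2))} (hsub : σ' ⊆ σ) :
    ∀ m' ∈ Mdef Y σ', ∃ m ∈ Mdef Y σ, BoxLE m m' := by
  classical
  intro m' hm'
  rw [Mdef, Finset.mem_union] at hm'
  rcases hm' with hm' | hm'
  · exact Mdef_refines_Y hY m' (Finset.mem_filter.mp hm').1
  · obtain ⟨A, hAσ', rfl⟩ := Finset.mem_image.mp hm'
    exact ⟨region Y σ A, Finset.mem_union_right _ (Finset.mem_image_of_mem _ (hsub hAσ')),
      region_mono hsub A⟩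

lemma Mdef_above_min (hY : Admissible Y) (hσg : ∀ A ∈ σ, Good Y A)
    (hσc : IsChain (fun A B => Expands A B) (σ : Set (Finset (Box 2))))
    {A₀ : Finset (Box 2)} (hA₀σ : A₀ ∈ σ) (hmin : ∀ B ∈ σ, Expands A₀ B) :
    ∀ m ∈ Mdef Y σ, ∃ a ∈ A₀, BoxLE a m := by
  classical
  intro m hm
  rw [Mdef, Finset.mem_union] at hm
  rcases hm with hm | hm
  · exact expands_refines (hσg A₀ hA₀σ).2.1 m (Finset.mem_filter.mp hm).1
  · obtain ⟨B, hBσ, rfl⟩ := Finset.mem_image.mp hm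
    by_cases hc : conflict Y σ B
    · obtain ⟨z0, i', hne, hz0B, hzi, hzi', hcells, hreg, A', hA'σ, hA'dir, hz0A'⟩ :=
        conflict_data hY hσg hσc hBσ hc
      rw [hreg]
      apply quad_block (admissible_isPartOf (hσg A₀ hA₀σ).1) (Ne.symm hne)
      · obtain ⟨a', ha', hle⟩ := (good_spec hY (hσg B hBσ)).1.2.2.2
        obtain ⟨a, ha, hle2⟩ := expands_refines (hmin B hBσ) a' ha'
        refine ⟨a, ha, hle2.trans ?_⟩
        rw [pairMem_parent hY (hσg B hBσ) hz0B]
        exact hle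
      · obtain ⟨a', ha', hle⟩ := (good_spec hY (hσg A' hA'σ)).1.2.2.2
        obtain ⟨a, ha, hle2⟩ := expands_refines (hmin A' hA'σ) a' ha'
        refine ⟨a, ha, hle2.trans ?_⟩
        rw [← hA'dir, pairMem_parent hY (hσg A' hA'σ) hz0A']
        exact hle
    · rw [region_noconflict hc]
      obtain ⟨a', ha', hle⟩ := (good_spec hY (hσg B hBσ)).1.2.2.2
      obtain ⟨a, ha, hle2⟩ := expands_refines (hmin B hBσ) a' ha'
      exact ⟨a, ha, hle2.trans hle⟩

lemma depth_quadBox_lt {b : Box 2} {i : Fin 2} (h : b i ≠ []) : depth (quadBox b) < depth b := by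
  rw [depth_two, depth_two]
  have h0 : ∀ j : Fin 2, (quadBox b j).length ≤ (b j).length := by
    intro j
    show ((b j).dropLast).length ≤ _
    rw [List.length_dropLast]
    omega
  have h1 : (quadBox b i).length < (b i).length := by
    show ((b i).dropLast).length < _
    rw [List.length_dropLast]
    have := List.length_pos_iff.mpr h
    omega
  have h2 := h0 0
  have h3 := h0 1
  rcases fin2_cases 0 1 (by decide) i with hi | hi
  · rw [hi] at h1
    omega
  · rw [hi] at h1
    omega

lemma depth_region_lt (hY : Admissible Y) {A : Finset (Box 2)} (hA : Good Y A) :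
    depth (region Y σ A) < depth (pb Y A).1 := by
  classical
  by_cases hc : conflict Y σ A
  · rw [region, if_pos hc]
    exact depth_quadBox_lt ((good_spec hY hA).1.2.2.1)
  · rw [region_noconflict hc]
    exact depth_parentBox_lt ((good_spec hY hA).1.2.2.1)

lemma region_not_mem_Y (hY : Admissible Y) {A : Finset (Box 2)} (hA : Good Y A) :
    region Y σ A ∉ Y := by
  intro hmem
  have hle : BoxLE (region Y σ A) (pb Y A).1 := boxLE_region_pair hY hA pairMem_self
  have hne : region Y σ A ≠ (pb Y A).1 := by
    intro he
    have := depth_region_lt (σ := σ) hY hA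
    rw [he] at this
    omega
  have := (admissible_isPartOf hY).eq_of_meets hmem (good_spec hY hA).1.1
    (by
      obtain ⟨p, hp⟩ := bs_nonempty (pb Y A).1
      exact ⟨p, bs_mono hle hp, hp⟩)
  exact hne this

lemma Mdef_ne_Y (hY : Admissible Y) (hσne : σ.Nonempty) (hσg : ∀ A ∈ σ, Good Y A) :
    Mdef Y σ ≠ Y := by
  obtain ⟨A, hAσ⟩ := hσne
  intro he
  have hmem : region Y σ A ∈ Mdef Y σ :=
    Finset.mem_union_right _ (Finset.mem_image_of_mem _ hAσ)
  rw [he] at hmem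
  exact region_not_mem_Y (σ := σ) hY (hσg A hAσ) hmem

-- counting
lemma region_filter_card_pair (hY : Admissible Y) {A : Finset (Box 2)} (hA : Good Y A)
    (hnc : ¬ conflict Y σ A) :
    (Y.filter (fun y => BoxLE (region Y σ A) y)).card ≤ 2 := by
  classical
  have hsub : Y.filter (fun y => BoxLE (region Y σ A) y) ⊆
      {(pb Y A).1, flipBox (pb Y A).2 (pb Y A).1} := by
    intro y hy
    obtain ⟨hyY, hle⟩ := Finset.mem_filter.mp hy
    have hmeet : (bs y ∩ bs (region Y σ A)).Nonempty := by
      obtain ⟨p, hp⟩ := bs_nonempty y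
      exact ⟨p, hp, bs_mono hle hp⟩
    rw [region_noconflict hnc] at hmeet
    rcases meets_parent hY hA hyY hmeet with h | h
    · rw [h]; exact Finset.mem_insert_self _ _
    · rw [h]; exact Finset.mem_insert_of_mem (Finset.mem_singleton_self _)
  apply le_trans (Finset.card_le_card hsub)
  apply le_trans (Finset.card_insert_le _ _)
  simp

lemma region_filter_card_quad (hY : Admissible Y) (hσg : ∀ A ∈ σ, Good Y A)
    (hσc : IsChain (fun A B => Expands A B) (σ : Set (Finset (Box 2))))
    {A : Finset (Box 2)} (hAσ : A ∈ σ) (hc : conflict Y σ A) :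
    (Y.filter (fun y => BoxLE (region Y σ A) y)).card ≤ 4 := by
  classical
  obtain ⟨z0, i', hne, hz0A, hzi, hzi', hcells, hreg, _⟩ := conflict_data hY hσg hσc hAσ hc
  have hsub : Y.filter (fun y => BoxLE (region Y σ A) y) ⊆
      {z0, flipBox (pb Y A).2 z0, flipBox i' z0, flipBox i' (flipBox (pb Y A).2 z0)} := by
    intro y hy
    obtain ⟨hyY, hle⟩ := Finset.mem_filter.mp hy
    have hmeet : (bs y ∩ bs (quadBox z0)).Nonempty := by
      obtain ⟨p, hp⟩ := bs_nonempty y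
      rw [hreg] at hle
      exact ⟨p, hp, bs_mono hle hp⟩
    have hcell := cell_of_meets_quad hY (Ne.symm hne) hzi hzi' hcells hyY hmeet
    rcases hcell with hc' | hc' | hc' | hc' <;> rw [hc'] <;> simp [Finset.mem_insert]
  apply le_trans (Finset.card_le_card hsub)
  apply le_trans (Finset.card_insert_le _ _)
  have h1 := Finset.card_insert_le (flipBox (pb Y A).2 z0)
    ({flipBox i' z0, flipBox i' (flipBox (pb Y A).2 z0)} : Finset (Box 2))
  have h2 := Finset.card_insert_le (flipBox i' z0)
    ({flipBox i' (flipBox (pb Y A).2 z0)} : Finset (Box 2))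
  have h3 : ({flipBox i' (flipBox (pb Y A).2 z0)} : Finset (Box 2)).card = 1 :=
    Finset.card_singleton _
  omega

lemma conflict_partner (hY : Admissible Y) (hσg : ∀ A ∈ σ, Good Y A)
    {A : Finset (Box 2)} (hAσ : A ∈ σ) (hc : conflict Y σ A) :
    ∃ A' ∈ σ, A' ≠ A ∧ conflict Y σ A' ∧ region Y σ A' = region Y σ A := by
  classical
  obtain ⟨A', hA'σ, hne, z0, hz0A, hz0A'⟩ := hc
  have hAne : A' ≠ A := by
    rintro rfl
    exact hne rfl
  have hcA' : conflict Y σ A' := ⟨A, hAσ, Ne.symm hne, z0, hz0A', hz0A⟩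
  refine ⟨A', hA'σ, hAne, hcA', ?_⟩
  rw [region, if_pos hcA', region, if_pos ⟨A', hA'σ, hne, z0, hz0A, hz0A'⟩]
  rw [← pairMem_quad hY (hσg A' hA'σ) hz0A', ← pairMem_quad hY (hσg A hAσ) hz0A]

lemma Mdef_count (hY : Admissible Y) (hσg : ∀ A ∈ σ, Good Y A)
    (hσc : IsChain (fun A B => Expands A B) (σ : Set (Finset (Box 2)))) :
    (Y \ Mdef Y σ).card ≤ 2 * σ.card := by
  classical
  set f : Box 2 → Finset (Box 2) := fun r => Y.filter (fun y => BoxLE r y) with hf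
  set σg := σ.filter (fun A => ¬ conflict Y σ A) with hσgdef
  set σb := σ.filter (fun A => conflict Y σ A) with hσbdef
  set Ig := σg.image (region Y σ) with hIg
  set Ib := σb.image (region Y σ) with hIb
  have hsub : Y \ Mdef Y σ ⊆ Ig.biUnion f ∪ Ib.biUnion f := by
    intro y hy
    obtain ⟨hyY, hyM⟩ := Finset.mem_sdiff.mp hy
    have hk : ∃ A ∈ σ, BoxLE (region Y σ A) y := by
      by_contra hk
      exact hyM (Finset.mem_union_left _ (Finset.mem_filter.mpr ⟨hyY, hk⟩))
    obtain ⟨A, hAσ, hle⟩ := hk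
    by_cases hc : conflict Y σ A
    · refine Finset.mem_union_right _ (Finset.mem_biUnion.mpr ⟨region Y σ A, ?_, ?_⟩)
      · exact Finset.mem_image_of_mem _ (Finset.mem_filter.mpr ⟨hAσ, hc⟩)
      · exact Finset.mem_filter.mpr ⟨hyY, hle⟩
    · refine Finset.mem_union_left _ (Finset.mem_biUnion.mpr ⟨region Y σ A, ?_, ?_⟩)
      · exact Finset.mem_image_of_mem _ (Finset.mem_filter.mpr ⟨hAσ, hc⟩)
      · exact Finset.mem_filter.mpr ⟨hyY, hle⟩
  have hcard1 : (Y \ Mdef Y σ).card ≤ (Ig.biUnion f).card + (Ib.biUnion f).card :=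
    le_trans (Finset.card_le_card hsub) (Finset.card_union_le _ _)
  have hg : (Ig.biUnion f).card ≤ 2 * σg.card := by
    apply le_trans (Finset.card_biUnion_le)
    have hbound : ∀ r ∈ Ig, (f r).card ≤ 2 := by
      intro r hr
      obtain ⟨A, hAg, rfl⟩ := Finset.mem_image.mp hr
      obtain ⟨hAσ, hnc⟩ := Finset.mem_filter.mp hAg
      exact region_filter_card_pair hY (hσg A hAσ) hnc
    calc ∑ r ∈ Ig, (f r).card ≤ ∑ _r ∈ Ig, 2 := Finset.sum_le_sum hbound
    _ = 2 * Ig.card := by rw [Finset.sum_const, smul_eq_mul, mul_comm]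
    _ ≤ 2 * σg.card := by
        have h := Finset.card_image_le (s := σg) (f := region Y σ)
        rw [hIg]
        omega
  have hb : (Ib.biUnion f).card ≤ 4 * Ib.card := by
    apply le_trans (Finset.card_biUnion_le)
    have hbound : ∀ r ∈ Ib, (f r).card ≤ 4 := by
      intro r hr
      obtain ⟨A, hAb, rfl⟩ := Finset.mem_image.mp hr
      obtain ⟨hAσ, hc⟩ := Finset.mem_filter.mp hAb
      exact region_filter_card_quad hY hσg hσc hAσ hc
    calc ∑ r ∈ Ib, (f r).card ≤ ∑ _r ∈ Ib, 4 := Finset.sum_le_sum hbound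
    _ = 4 * Ib.card := by rw [Finset.sum_const, smul_eq_mul, mul_comm]
  have hfib : 2 * Ib.card ≤ σb.card := by
    have hcardsum : σb.card = ∑ r ∈ Ib, (σb.filter (fun A => region Y σ A = r)).card :=
      Finset.card_eq_sum_card_fiberwise (fun A hA => Finset.mem_image_of_mem _ hA)
    have hfiber : ∀ r ∈ Ib, 2 ≤ (σb.filter (fun A => region Y σ A = r)).card := by
      intro r hr
      obtain ⟨A, hAb, rfl⟩ := Finset.mem_image.mp hr
      obtain ⟨hAσ, hc⟩ := Finset.mem_filter.mp hAb
      obtain ⟨A', hA'σ, hA'ne, hcA', hreq⟩ := conflict_partner hY hσg hAσ hc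
      apply Finset.one_lt_card.mpr
      refine ⟨A, ?_, A', ?_, Ne.symm hA'ne⟩
      · exact Finset.mem_filter.mpr ⟨Finset.mem_filter.mpr ⟨hAσ, hc⟩, rfl⟩
      · exact Finset.mem_filter.mpr ⟨Finset.mem_filter.mpr ⟨hA'σ, hcA'⟩, hreq⟩
    calc 2 * Ib.card = ∑ _r ∈ Ib, 2 := by rw [Finset.sum_const, smul_eq_mul, mul_comm]
    _ ≤ ∑ r ∈ Ib, (σb.filter (fun A => region Y σ A = r)).card := Finset.sum_le_sum hfiber
    _ = σb.card := hcardsum.symm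
  have hsplit : σg.card + σb.card = σ.card := by
    rw [hσgdef, hσbdef, add_comm]
    exact Finset.card_filter_add_card_filter_not (p := fun A => conflict Y σ A)
  omega

end MDef

private theorem pushing_map_aux (Y : Finset (Box 2)) (hY : Admissible Y) :
    ∃ M : Finset (Finset (Box 2)) → Finset (Box 2),
      (∀ σ : Finset (Finset (Box 2)), σ.Nonempty →
        (∀ A ∈ σ, Admissible A ∧ Expands A Y ∧ A ≠ Y) →
        IsChain (fun A B => Expands A B) (↑σ : Set (Finset (Box 2))) →
          ((Admissible (M σ) ∧ Expands (M σ) Y ∧ M σ ≠ Y) ∧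
           (∀ A ∈ σ, (∀ B ∈ σ, Expands A B) → Expands A (M σ)) ∧
           (σ.card = 1 → (Y \ M σ).card ≤ 2) ∧
           (2 ≤ σ.card → (Y \ M σ).card ≤ 4 * (σ.card - 1)))) ∧
      (∀ σ σ' : Finset (Finset (Box 2)), σ'.Nonempty → σ' ⊆ σ →
        (∀ A ∈ σ, Admissible A ∧ Expands A Y ∧ A ≠ Y) →
        IsChain (fun A B => Expands A B) (↑σ : Set (Finset (Box 2))) →
          Expands (M σ) (M σ')) := by
  refine ⟨Mdef Y, ?_, ?_⟩
  · intro σ hne hσg hσc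
    refine ⟨⟨?_, ?_, Mdef_ne_Y hY hne hσg⟩, ?_, ?_, ?_⟩
    · apply expands_of_refines (trivialPartition 2).card _ _ Set.univ rfl trivial_isPartOf
        (Mdef_isPart hY hσg hσc)
      intro m _
      refine ⟨fun _ => [], ?_, fun i => List.nil_prefix⟩
      simp [trivialPartition]
    · exact expands_of_refines (Mdef Y σ).card _ _ Set.univ rfl (Mdef_isPart hY hσg hσc)
        (admissible_isPartOf hY) (Mdef_refines_Y hY)
    · intro A hAσ hmin
      exact expands_of_refines A.card _ _ Set.univ rfl (admissible_isPartOf (hσg A hAσ).1)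
        (Mdef_isPart hY hσg hσc) (Mdef_above_min hY hσg hσc hAσ hmin)
    · intro hcard1
      have := Mdef_count hY hσg hσc
      omega
    · intro hcard2
      have := Mdef_count hY hσg hσc
      omega
  · intro σ σ' _hne' hsub hσg hσc
    have hσg' : ∀ A ∈ σ', Good Y A := fun A hA => hσg A (hsub hA)
    have hσc' : IsChain (fun A B => Expands A B) (↑σ' : Set (Finset (Box 2))) := by
      intro x hx y hy hxy
      exact hσc (Finset.mem_coe.mpr (hsub (Finset.mem_coe.mp hx)))
        (Finset.mem_coe.mpr (hsub (Finset.mem_coe.mp hy))) hxy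
    exact expands_of_refines (Mdef Y σ).card _ _ Set.univ rfl (Mdef_isPart hY hσg hσc)
      (Mdef_isPart hY hσg' hσc') (Mdef_mono hY hsub)

/-- `s = 2`: the pushing map. There is an order-reversing map `M` from nonempty
finite chains in `K_Y` to `K_Y` with `A_t ≤ M(σ)` for the least vertex `A_t` of a chain `σ`,
such that `M(σ)` involves at most `2` elements of `Y` for a vertex and at most `4t` elements
for a `t`-simplex (`t ≥ 1`). -/
theorem exists_pushing_map_2V (Y : Finset (Box 2)) (hY : Admissible Y) :
    ∃ M : Finset (Finset (Box 2)) → Finset (Box 2),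
      (∀ σ : Finset (Finset (Box 2)), σ.Nonempty →
        (∀ A ∈ σ, Admissible A ∧ Expands A Y ∧ A ≠ Y) →
        IsChain (fun A B => Expands A B) (↑σ : Set (Finset (Box 2))) →
          ((Admissible (M σ) ∧ Expands (M σ) Y ∧ M σ ≠ Y) ∧
           (∀ A ∈ σ, (∀ B ∈ σ, Expands A B) → Expands A (M σ)) ∧
           (σ.card = 1 → (Y \ M σ).card ≤ 2) ∧
           (2 ≤ σ.card → (Y \ M σ).card ≤ 4 * (σ.card - 1)))) ∧
      (∀ σ σ' : Finset (Finset (Box 2)), σ'.Nonempty → σ' ⊆ σ →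
        (∀ A ∈ σ, Admissible A ∧ Expands A Y ∧ A ≠ Y) →
        IsChain (fun A B => Expands A B) (↑σ : Set (Finset (Box 2))) →
          Expands (M σ) (M σ')) :=
  pushing_map_aux Y hY

end BrinThompson
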